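/- arXiv:1811.08748 — 3 statements merged into one kernel-verified Lean document; each statement's English description precedes it below -/
import Mathlib

section
/- Every Lie group has no small subgroups: there exists a neighborhood U of the identity such that the only subgroup contained in U is the trivial subgroup. -/
open Set Metric

section aux

variable {E : Type*} [NormedAddCommGroup E] [NormedSpace ℝ E]
  {H : Type*} [TopologicalSpace H] {I : ModelWithCorners ℝ E H}
  {G : Type*} [TopologicalSpace G] [ChartedSpace H G] [Group G] [LieGroup I (⊤ : ℕ∞) G]

/-- The derivative of the squaring map at the identity is `v ↦ v + v`. -/
lemma mfderiv_sq_one_apply (v : E) :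
    (mfderiv I I (fun g : G => g * g) 1 : E →L[ℝ] E) v = v + v := by
  have hm : MDifferentiableAt (I.prod I) I (fun p : G × G => p.1 * p.2) ((1 : G), (1 : G)) :=
    (contMDiff_mul I (⊤ : ℕ∞) (((1 : G), (1 : G)) : G × G)).mdifferentiableAt (by simp)
  have hd : MDifferentiableAt I (I.prod I) (fun g : G => (g, g)) 1 :=
    mdifferentiableAt_id.prodMk mdifferentiableAt_id
  have h1 : (fun g : G => g * g) = (fun p : G × G => p.1 * p.2) ∘ (fun g : G => (g, g)) := rfl
  have hcomp := mfderiv_comp (I := I) (I' := I.prod I) (I'' := I)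
    (f := fun g : G => (g, g)) (g := fun p : G × G => p.1 * p.2) (x := (1 : G)) hm hd
  rw [h1, hcomp]
  have hdd : mfderiv I (I.prod I) (fun g : G => (g, g)) 1 =
      (mfderiv I I (fun g : G => g) 1).prod (mfderiv I I (fun g : G => g) 1) :=
    mdifferentiableAt_id.mfderiv_prod mdifferentiableAt_id
  have hid : mfderiv I I (fun g : G => g) (1 : G) = ContinuousLinearMap.id ℝ _ := mfderiv_id
  have happ : mfderiv I (I.prod I) (fun g : G => (g, g)) 1 v = (v, v) := by
    rw [hdd, hid]; rfl
  change mfderiv (I.prod I) I (fun p : G × G => p.1 * p.2) ((1 : G), (1 : G))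
      (mfderiv I (I.prod I) (fun g : G => (g, g)) 1 v) = v + v
  rw [happ]
  have := mfderiv_prod_eq_add_apply (I := I) (I' := I) (I'' := I)
    (f := fun p : G × G => p.1 * p.2) (p := ((1 : G), (1 : G))) (v := (v, v)) hm
  rw [this]
  have e1 : (fun z : G => z * 1) = fun z : G => z := by funext z; exact mul_one z
  have e2 : (fun z : G => 1 * z) = fun z : G => z := by funext z; exact one_mul z
  rw [e1, e2, hid]
  rfl

end aux

/-- Every (finite-dimensional real) Lie group has no small subgroups: there exists a
neighborhood `U` of the identity such that the only subgroup contained in `U` is trivial. -/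
theorem lie_group_no_small_subgroups
    {E : Type*} [NormedAddCommGroup E] [NormedSpace ℝ E] [FiniteDimensional ℝ E]
    {H : Type*} [TopologicalSpace H] (I : ModelWithCorners ℝ E H)
    (G : Type*) [TopologicalSpace G] [ChartedSpace H G] [Group G] [LieGroup I (⊤ : ℕ∞) G] :
    ∃ U ∈ nhds (1 : G), ∀ K : Subgroup G, (K : Set G) ⊆ U → K = ⊥ := by
  set q : G → G := fun g => g * g with hq
  set e := extChartAt I (1 : G) with he
  set c : E := e 1 with hc
  have hq1 : q 1 = 1 := mul_one 1
  have hmd : MDifferentiableAt I I q 1 :=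
    ((contMDiff_id.mul contMDiff_id : ContMDiff I I (⊤ : ℕ∞) q) 1).mdifferentiableAt (by simp)
  have hF : HasFDerivWithinAt (writtenInExtChartAt I I 1 q)
      (mfderiv I I q 1) (range I) c := hmd.hasMFDerivAt.2
  have hlo := (hF.isLittleO).def (show (0:ℝ) < 1/2 by norm_num)
  rw [Filter.eventually_iff, Metric.mem_nhdsWithin_iff] at hlo
  obtain ⟨r, hr0, hrb⟩ := hlo
  -- `F c = c`
  have h1src : (1 : G) ∈ e.source := mem_extChartAt_source 1
  have hFc : writtenInExtChartAt I I 1 q c = c := by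
    simp only [writtenInExtChartAt, hq1, Function.comp_apply, ← he, ← hc,
      e.left_inv h1src, hq1]
    rw [hc, e.left_inv h1src, hq1]
  -- key estimate
  have key : ∀ g : G, g ∈ e.source → q g ∈ e.source → dist (e g) c < r →
      (3/2 : ℝ) * ‖e g - c‖ ≤ ‖e (q g) - c‖ := by
    intro g hg hg2 hdist
    have hgrange : e g ∈ range I :=
      extChartAt_target_subset_range (1 : G) (e.map_source hg)
    have hb := hrb ⟨mem_ball.mpr hdist, hgrange⟩
    simp only [Set.mem_setOf_eq] at hb
    have hFg : writtenInExtChartAt I I 1 q (e g) = e (q g) := by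
      simp only [writtenInExtChartAt, hq1, Function.comp_apply, ← he, e.left_inv hg]
    rw [hFg, hFc] at hb
    have hb' : ‖e (q g) - c - ((e g - c) + (e g - c))‖ ≤ 1/2 * ‖e g - c‖ := by
      rw [show ((e g - c) + (e g - c)) = (mfderiv I I q 1 : E →L[ℝ] E) (e g - c) from
        (mfderiv_sq_one_apply _).symm]
      exact hb
    have h2 : ‖(e g - c) + (e g - c)‖ = 2 * ‖e g - c‖ := by
      rw [← two_smul ℝ (e g - c), norm_smul]; simp
    have h3 := norm_sub_norm_le ((e g - c) + (e g - c)) (e (q g) - c)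
    rw [norm_sub_rev (e g - c + (e g - c)) (e (q g) - c)] at h3
    linarith
  -- the neighborhood
  refine ⟨e.source ∩ e ⁻¹' ball c r, ?_, ?_⟩
  · exact Filter.inter_mem (extChartAt_source_mem_nhds 1)
      ((continuousAt_extChartAt (1:G)).preimage_mem_nhds (ball_mem_nhds c hr0))
  intro K hK
  rw [Subgroup.eq_bot_iff_forall]
  intro g hgK
  by_contra hg1
  have hmem : ∀ n : ℕ, g ^ (2^n) ∈ K := fun n => K.pow_mem hgK _
  have hUg : ∀ n : ℕ, g ^ (2^n) ∈ e.source ∧ e (g ^ (2^n)) ∈ ball c r := by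
    intro n; exact hK (hmem n)
  set a : ℝ := ‖e g - c‖ with ha
  have hga : g ∈ e.source ∧ e g ∈ ball c r := hK hgK
  have ha0 : 0 < a := by
    rw [ha, norm_pos_iff, sub_ne_zero]
    intro heq
    exact hg1 ((extChartAt I (1:G)).injOn.eq_iff hga.1 h1src |>.mp heq)
  have grow : ∀ n : ℕ, (3/2 : ℝ)^n * a ≤ ‖e (g ^ (2^n)) - c‖ := by
    intro n
    induction n with
    | zero => simp [a]
    | succ n ih =>
      have hsq : g ^ (2^(n+1)) = q (g ^ (2^n)) := by
        rw [hq]; rw [pow_succ, pow_mul]; exact sq (g ^ (2^n))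
      have h1 := (hUg n).1
      have h2 : q (g ^ (2^n)) ∈ e.source := hsq ▸ (hUg (n+1)).1
      have h3 : dist (e (g ^ (2^n))) c < r := mem_ball.mp (hUg n).2
      have := key _ h1 h2 h3
      rw [hsq]
      calc (3/2 : ℝ)^(n+1) * a = (3/2) * ((3/2)^n * a) := by ring
        _ ≤ (3/2) * ‖e (g ^ (2^n)) - c‖ := by nlinarith
        _ ≤ ‖e (q (g ^ (2^n))) - c‖ := this
  obtain ⟨n, hn⟩ := pow_unbounded_of_one_lt (r / a) (show (1:ℝ) < 3/2 by norm_num)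
  have hlt : ‖e (g ^ (2^n)) - c‖ < r := by
    have := (hUg n).2
    rw [mem_ball, dist_eq_norm] at this
    exact this
  have : r < (3/2 : ℝ)^n * a := by
    rw [div_lt_iff₀ ha0] at hn; linarith
  linarith [grow n]
end

section
/- The braid group B_n on n strands is torsion-free: its only element of finite order is the identity. -/
/-- The braid relations on `n` generators `σ_0, …, σ_{n-1}`:
commutation `σ_i σ_j = σ_j σ_i` for `|i - j| ≥ 2` and the braid relation
`σ_i σ_{i+1} σ_i = σ_{i+1} σ_i σ_{i+1}`. -/
def braidRels (n : ℕ) : Set (FreeGroup (Fin n)) :=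
  {r | ∃ i j : Fin n, (i : ℕ) + 2 ≤ (j : ℕ) ∧
      r = FreeGroup.of i * FreeGroup.of j * (FreeGroup.of j * FreeGroup.of i)⁻¹} ∪
  {r | ∃ i j : Fin n, (i : ℕ) + 1 = (j : ℕ) ∧
      r = FreeGroup.of i * FreeGroup.of j * FreeGroup.of i *
        (FreeGroup.of j * FreeGroup.of i * FreeGroup.of j)⁻¹}

namespace BraidTF

/-- Words over the infinite alphabet ℕ (generator indices). -/
abbrev W := List ℕ

def far (i j : ℕ) : Prop := i + 2 ≤ j ∨ j + 2 ≤ i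
def adj (i j : ℕ) : Prop := i + 1 = j ∨ j + 1 = i

lemma far.symm {i j : ℕ} (h : far i j) : far j i := h.elim .inr .inl
lemma adj.symm {i j : ℕ} (h : adj i j) : adj j i := h.elim .inr .inl

/-- One rewriting step using a braid relation, in context. -/
inductive Bstep : W → W → Prop
  | comm (a b : W) (i j : ℕ) (h : far i j) : Bstep (a ++ i :: j :: b) (a ++ j :: i :: b)
  | braid (a b : W) (i j : ℕ) (h : adj i j) :
      Bstep (a ++ i :: j :: i :: b) (a ++ j :: i :: j :: b)

/-- Equivalence of positive braid words. -/
def Beq : W → W → Prop := Relation.ReflTransGen Bstep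

local infix:50 " ≋ " => Beq

lemma Bstep.symm' {u v : W} (h : Bstep u v) : Bstep v u := by
  cases h with
  | comm a b i j h => exact .comm a b j i h.symm
  | braid a b i j h => exact .braid a b j i h.symm

@[refl] lemma Beq.refl (u : W) : u ≋ u := Relation.ReflTransGen.refl

@[simp] lemma beq_self (u : W) : Beq u u := Relation.ReflTransGen.refl

lemma Beq.rtrans {u v w : W} (h : u ≋ v) (h' : v ≋ w) : u ≋ w :=
  Relation.ReflTransGen.trans h h'

lemma Beq.symm {u v : W} (h : u ≋ v) : v ≋ u := by
  induction h with
  | refl => rfl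
  | tail _ h ih => exact Relation.ReflTransGen.trans (Relation.ReflTransGen.single h.symm') ih

lemma Bstep.beq {u v : W} (h : Bstep u v) : u ≋ v := Relation.ReflTransGen.single h

lemma Bstep.append {u v : W} (h : Bstep u v) (a b : W) : Bstep (a ++ u ++ b) (a ++ v ++ b) := by
  cases h with
  | comm c d i j h =>
      have e1 : a ++ (c ++ i :: j :: d) ++ b = (a ++ c) ++ i :: j :: (d ++ b) := by simp
      have e2 : a ++ (c ++ j :: i :: d) ++ b = (a ++ c) ++ j :: i :: (d ++ b) := by simp
      rw [e1, e2]; exact .comm _ _ i j h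
  | braid c d i j h =>
      have e1 : a ++ (c ++ i :: j :: i :: d) ++ b = (a ++ c) ++ i :: j :: i :: (d ++ b) := by simp
      have e2 : a ++ (c ++ j :: i :: j :: d) ++ b = (a ++ c) ++ j :: i :: j :: (d ++ b) := by simp
      rw [e1, e2]; exact .braid _ _ i j h

lemma Beq.context {u v : W} (h : u ≋ v) (a b : W) : a ++ u ++ b ≋ a ++ v ++ b := by
  induction h with
  | refl => rfl
  | tail _ h ih => exact ih.rtrans (h.append a b).beq

lemma Beq.append_left {u v : W} (a : W) (h : u ≋ v) : a ++ u ≋ a ++ v := by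
  simpa using h.context a []

lemma Beq.append_right {u v : W} (h : u ≋ v) (b : W) : u ++ b ≋ v ++ b := by
  simpa using h.context [] b

lemma Beq.cons {u v : W} (i : ℕ) (h : u ≋ v) : i :: u ≋ i :: v := by
  simpa using h.append_left [i]

lemma Beq.append {u v x y : W} (h : u ≋ v) (h' : x ≋ y) : u ++ x ≋ v ++ y :=
  (h.append_right x).rtrans (h'.append_left v)

/-- Basic step as Beq, head form. -/
lemma beq_comm {i j : ℕ} (h : far i j) (b : W) : i :: j :: b ≋ j :: i :: b :=
  (Bstep.comm [] b i j h).beq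

lemma beq_braid {i j : ℕ} (h : adj i j) (b : W) : i :: j :: i :: b ≋ j :: i :: j :: b :=
  (Bstep.braid [] b i j h).beq

lemma Bstep.length {u v : W} (h : Bstep u v) : u.length = v.length := by
  cases h <;> simp

lemma Beq.length {u v : W} (h : u ≋ v) : u.length = v.length := by
  induction h with
  | refl => rfl
  | tail _ h ih => exact ih.trans h.length

lemma Bstep.mem {u v : W} (h : Bstep u v) {x : ℕ} (hx : x ∈ v) : x ∈ u := by
  cases h with
  | comm a b i j _ => simp at hx ⊢; tauto
  | braid a b i j _ => simp at hx ⊢; tauto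

lemma Beq.mem {u v : W} (h : u ≋ v) {x : ℕ} (hx : x ∈ v) : x ∈ u := by
  induction h with
  | refl => exact hx
  | tail _ h ih => exact ih (h.mem hx)

instance : Trans Beq Beq Beq := ⟨Beq.rtrans⟩

lemma rel3 (i j : ℕ) : i = j ∨ adj i j ∨ far i j := by unfold far adj; omega

lemma V1 {i j : ℕ} (h : far i j) (h' : i = j) : False := by unfold far at h; omega
lemma V2 {i j : ℕ} (h : far i j) (h' : adj i j) : False := by unfold far adj at *; omega
lemma V3 {i j : ℕ} (h : adj i j) (h' : i = j) : False := by unfold adj at h; omega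
lemma V5 {i j k : ℕ} (h : adj i j) (h' : adj j k) (h'' : adj i k) : False := by
  unfold adj at *; omega

/-- Garside's key lemma: head analysis of equivalent positive braid words. -/
theorem key : ∀ N, ∀ u v : W, u.length ≤ N → Beq u v →
    ∀ i j u₁ v₁, u = i :: u₁ → v = j :: v₁ →
      (i = j → Beq u₁ v₁) ∧
      (far i j → ∃ w, Beq u₁ (j :: w) ∧ Beq v₁ (i :: w)) ∧
      (adj i j → ∃ w, Beq u₁ (j :: i :: w) ∧ Beq v₁ (i :: j :: w)) := by
  intro N
  induction N with
  | zero => rintro u v hlen _ i j u₁ v₁ rfl rfl; simp at hlen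
  | succ N KEY =>
    intro u v hlen hbeq
    revert hlen
    induction hbeq using Relation.ReflTransGen.head_induction_on with
    | refl =>
        rintro hlen i j u₁ v₁ rfl hv
        injection hv with h1 h2
        subst h1; subst h2
        exact ⟨fun _ => .refl _, fun hf => (V1 hf rfl).elim, fun ha => (V3 ha rfl).elim⟩
    | head hstep hcv ih =>
        rintro hlen i j u₁ v₁ ha hv
        cases hstep with
        | comm pre q i' j' hfar =>
          cases pre with
          | cons hd tl =>
            rw [List.cons_append] at ha
            injection ha with h1 h2
            subst h1
            have hlc : (hd :: (tl ++ j' :: i' :: q)).length ≤ N + 1 := by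
              simp at hlen ⊢; omega
            obtain ⟨E, F, A⟩ := ih hlc hd j (tl ++ j' :: i' :: q) v₁ rfl hv
            have hstep' : u₁ ≋ tl ++ j' :: i' :: q := by
              rw [← h2]; exact (Bstep.comm tl q i' j' hfar).beq
            refine ⟨fun hij => hstep'.rtrans (E hij), ?_, ?_⟩
            · rintro hf; obtain ⟨w, h3, h4⟩ := F hf; exact ⟨w, hstep'.rtrans h3, h4⟩
            · rintro hadj; obtain ⟨w, h3, h4⟩ := A hadj; exact ⟨w, hstep'.rtrans h3, h4⟩
          | nil =>
            simp only [List.nil_append] at ha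
            injection ha with h1 h2
            subst h1
            subst h2
            have hlc : (j' :: i' :: q).length ≤ N + 1 := by simp at hlen ⊢; omega
            obtain ⟨E, F, A⟩ := ih hlc j' j (i' :: q) v₁ rfl hv
            have hlq : (i' :: q).length ≤ N := by simp at hlen ⊢; omega
            rcases rel3 j' j with rfl | hjj | hjj
            · refine ⟨fun hij => (V1 hfar hij).elim, ?_, fun hadj => (V2 hfar hadj).elim⟩
              rintro _
              exact ⟨q, .refl _, (E rfl).symm⟩
            · -- adj j' j
              obtain ⟨w, hTw, hv₁⟩ := A hjj
              have hl2 : (j' :: w).length ≤ N := by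
                have := hTw.length; simp at this hlq ⊢; omega
              refine ⟨?_, ?_, ?_⟩
              · rintro rfl; exact (V2 hfar hjj.symm).elim
              · rintro hij
                obtain ⟨-, Fb, -⟩ := KEY _ _ hlq hTw i' j q (j' :: w) rfl rfl
                obtain ⟨t, hqt, h2⟩ := Fb hij
                obtain ⟨-, Fc, -⟩ := KEY _ _ hl2 h2 j' i' w t rfl rfl
                obtain ⟨s, hws, hts⟩ := Fc hfar.symm
                refine ⟨j' :: j :: s, ?_, ?_⟩
                · calc (j' :: q : W) ≋ j' :: j :: t := Beq.cons j' hqt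
                    _ ≋ j' :: j :: j' :: s := Beq.cons j' (Beq.cons j hts)
                    _ ≋ j :: j' :: j :: s := beq_braid hjj s
                · calc v₁ ≋ j' :: j :: w := hv₁
                    _ ≋ j' :: j :: i' :: s := Beq.cons j' (Beq.cons j hws)
                    _ ≋ j' :: i' :: j :: s := Beq.cons j' (beq_comm hij.symm s)
                    _ ≋ i' :: j' :: j :: s := beq_comm hfar.symm (j :: s)
              · rintro hij
                obtain ⟨-, -, Ab⟩ := KEY _ _ hlq hTw i' j q (j' :: w) rfl rfl
                obtain ⟨t, hqt, h2⟩ := Ab hij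
                obtain ⟨-, Fc, -⟩ := KEY _ _ hl2 h2 j' i' w (j :: t) rfl rfl
                obtain ⟨s, hws, h3⟩ := Fc hfar.symm
                have hl3 : (j :: t).length ≤ N := by
                  have := h2.length; simp at this hl2 ⊢; omega
                obtain ⟨-, -, Ad⟩ := KEY _ _ hl3 h3 j j' t s rfl rfl
                obtain ⟨p, htp, hsp⟩ := Ad hjj.symm
                refine ⟨j' :: j :: i' :: p, ?_, ?_⟩
                · calc (j' :: q : W) ≋ j' :: j :: i' :: t := Beq.cons j' hqt
                    _ ≋ j' :: j :: i' :: j' :: j :: p :=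
                        Beq.cons j' (Beq.cons j (Beq.cons i' htp))
                    _ ≋ j' :: j :: j' :: i' :: j :: p :=
                        Beq.cons j' (Beq.cons j (beq_comm hfar (j :: p)))
                    _ ≋ j :: j' :: j :: i' :: j :: p := beq_braid hjj (i' :: j :: p)
                    _ ≋ j :: j' :: i' :: j :: i' :: p :=
                        Beq.cons j (Beq.cons j' (beq_braid hij.symm p))
                    _ ≋ j :: i' :: j' :: j :: i' :: p :=
                        Beq.cons j (beq_comm hfar.symm (j :: i' :: p))
                · calc v₁ ≋ j' :: j :: w := hv₁
                    _ ≋ j' :: j :: i' :: s := Beq.cons j' (Beq.cons j hws)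
                    _ ≋ j' :: j :: i' :: j :: j' :: p :=
                        Beq.cons j' (Beq.cons j (Beq.cons i' hsp))
                    _ ≋ j' :: i' :: j :: i' :: j' :: p :=
                        Beq.cons j' (beq_braid hij.symm (j' :: p))
                    _ ≋ i' :: j' :: j :: i' :: j' :: p := beq_comm hfar.symm (j :: i' :: j' :: p)
                    _ ≋ i' :: j' :: j :: j' :: i' :: p :=
                        Beq.cons i' (Beq.cons j' (Beq.cons j (beq_comm hfar p)))
                    _ ≋ i' :: j :: j' :: j :: i' :: p :=
                        Beq.cons i' (beq_braid hjj (i' :: p))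
            · -- far j' j
              obtain ⟨w, hTw, hv₁⟩ := F hjj
              refine ⟨?_, ?_, ?_⟩
              · rintro rfl
                obtain ⟨Eb, -, -⟩ := KEY _ _ hlq hTw i' i' q w rfl rfl
                exact (Beq.cons j' (Eb rfl)).rtrans hv₁.symm
              · rintro hij
                obtain ⟨-, Fb, -⟩ := KEY _ _ hlq hTw i' j q w rfl rfl
                obtain ⟨t, hqt, hwt⟩ := Fb hij
                refine ⟨j' :: t, ?_, ?_⟩
                · calc (j' :: q : W) ≋ j' :: j :: t := Beq.cons j' hqt
                    _ ≋ j :: j' :: t := beq_comm hjj t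
                · calc v₁ ≋ j' :: w := hv₁
                    _ ≋ j' :: i' :: t := Beq.cons j' hwt
                    _ ≋ i' :: j' :: t := beq_comm hfar.symm t
              · rintro hij
                obtain ⟨-, -, Ab⟩ := KEY _ _ hlq hTw i' j q w rfl rfl
                obtain ⟨t, hqt, hwt⟩ := Ab hij
                refine ⟨j' :: t, ?_, ?_⟩
                · calc (j' :: q : W) ≋ j' :: j :: i' :: t := Beq.cons j' hqt
                    _ ≋ j :: j' :: i' :: t := beq_comm hjj (i' :: t)
                    _ ≋ j :: i' :: j' :: t := Beq.cons j (beq_comm hfar.symm t)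
                · calc v₁ ≋ j' :: w := hv₁
                    _ ≋ j' :: i' :: j :: t := Beq.cons j' hwt
                    _ ≋ i' :: j' :: j :: t := beq_comm hfar.symm (j :: t)
                    _ ≋ i' :: j :: j' :: t := Beq.cons i' (beq_comm hjj t)
        | braid pre q i' j' hadj =>
          cases pre with
          | cons hd tl =>
            rw [List.cons_append] at ha
            injection ha with h1 h2
            subst h1
            have hlc : (hd :: (tl ++ j' :: i' :: j' :: q)).length ≤ N + 1 := by
              simp at hlen ⊢; omega
            obtain ⟨E, F, A⟩ := ih hlc hd j (tl ++ j' :: i' :: j' :: q) v₁ rfl hv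
            have hstep' : u₁ ≋ tl ++ j' :: i' :: j' :: q := by
              rw [← h2]; exact (Bstep.braid tl q i' j' hadj).beq
            refine ⟨fun hij => hstep'.rtrans (E hij), ?_, ?_⟩
            · rintro hf; obtain ⟨w, h3, h4⟩ := F hf; exact ⟨w, hstep'.rtrans h3, h4⟩
            · rintro hadj'; obtain ⟨w, h3, h4⟩ := A hadj'; exact ⟨w, hstep'.rtrans h3, h4⟩
          | nil =>
            simp only [List.nil_append] at ha
            injection ha with h1 h2
            subst h1
            subst h2
            -- a = i' :: j' :: i' :: q → c = j' :: i' :: j' :: q,  adj i' j'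
            have hlc : (j' :: i' :: j' :: q).length ≤ N + 1 := by simp at hlen ⊢; omega
            obtain ⟨E, F, A⟩ := ih hlc j' j (i' :: j' :: q) v₁ rfl hv
            have hlq : (i' :: j' :: q).length ≤ N := by simp at hlen ⊢; omega
            rcases rel3 j' j with rfl | hjj | hjj
            · refine ⟨fun hij => (V3 hadj hij).elim, fun hf => (V2 hf hadj).elim, ?_⟩
              rintro _
              exact ⟨q, .refl _, (E rfl).symm⟩
            · -- adj j' j
              refine ⟨?_, ?_, fun hij => (V5 hadj hjj hij).elim⟩
              · rintro rfl
                obtain ⟨w, hTw, hv₁⟩ := A hjj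
                obtain ⟨Eb, -, -⟩ := KEY _ _ hlq hTw i' i' (j' :: q) (j' :: w) rfl rfl
                have h2 := Eb rfl
                have hl2 : (j' :: q).length ≤ N := by simp at hlen ⊢; omega
                obtain ⟨Ec, -, -⟩ := KEY _ _ hl2 h2 j' j' q w rfl rfl
                have h3 := Ec rfl
                calc (j' :: i' :: q : W) ≋ j' :: i' :: w := Beq.cons j' (Beq.cons i' h3)
                  _ ≋ v₁ := hv₁.symm
              · rintro hij
                -- the hard chain case: adj i' j', adj j' j, far i' j
                obtain ⟨w, hTw, hv₁⟩ := A hjj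
                obtain ⟨-, Fb, -⟩ := KEY _ _ hlq hTw i' j (j' :: q) (j' :: w) rfl rfl
                obtain ⟨t, h2, h3⟩ := Fb hij
                have hl2 : (j' :: q).length ≤ N := by simp at hlen ⊢; omega
                obtain ⟨-, -, Ac⟩ := KEY _ _ hl2 h2 j' j q t rfl rfl
                obtain ⟨s, hqs, hts⟩ := Ac hjj
                have hl3 : (j' :: w).length ≤ N := by
                  have := hTw.length; simp at this hlq ⊢; omega
                obtain ⟨-, -, Ad⟩ := KEY _ _ hl3 h3 j' i' w t rfl rfl
                obtain ⟨p, hwp, htp⟩ := Ad hadj.symm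
                have hl4 : t.length ≤ N := by
                  have := h3.length; simp at this hl3 ⊢; omega
                have h4 : (j :: s : W) ≋ i' :: p := by
                  have c1 : (j' :: j :: s : W) ≋ j' :: i' :: p := hts.symm.rtrans htp
                  have hl5 : (j' :: j :: s).length ≤ N := by
                    have := hts.length; simp at this hl4 ⊢; omega
                  obtain ⟨Ee, -, -⟩ := KEY _ _ hl5 c1 j' j' (j :: s) (i' :: p) rfl rfl
                  exact Ee rfl
                have hl6 : (j :: s).length ≤ N := by
                  have := hts.length; simp at this hl4 ⊢; omega
                obtain ⟨-, Ff, -⟩ := KEY _ _ hl6 h4 j i' s p rfl rfl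
                obtain ⟨x, hsx, hpx⟩ := Ff hij.symm
                refine ⟨j' :: i' :: j :: j' :: x, ?_, ?_⟩
                · calc (j' :: i' :: q : W) ≋ j' :: i' :: j :: j' :: s :=
                        Beq.cons j' (Beq.cons i' hqs)
                    _ ≋ j' :: i' :: j :: j' :: i' :: x :=
                        Beq.cons j' (Beq.cons i' (Beq.cons j (Beq.cons j' hsx)))
                    _ ≋ j' :: j :: i' :: j' :: i' :: x :=
                        Beq.cons j' (beq_comm hij (j' :: i' :: x))
                    _ ≋ j' :: j :: j' :: i' :: j' :: x :=
                        Beq.cons j' (Beq.cons j (beq_braid hadj x))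
                    _ ≋ j :: j' :: j :: i' :: j' :: x := beq_braid hjj (i' :: j' :: x)
                    _ ≋ j :: j' :: i' :: j :: j' :: x :=
                        Beq.cons j (Beq.cons j' (beq_comm hij.symm (j' :: x)))
                · calc v₁ ≋ j' :: j :: w := hv₁
                    _ ≋ j' :: j :: i' :: j' :: p := Beq.cons j' (Beq.cons j hwp)
                    _ ≋ j' :: j :: i' :: j' :: j :: x :=
                        Beq.cons j' (Beq.cons j (Beq.cons i' (Beq.cons j' hpx)))
                    _ ≋ j' :: i' :: j :: j' :: j :: x :=
                        Beq.cons j' (beq_comm hij.symm (j' :: j :: x))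
                    _ ≋ j' :: i' :: j' :: j :: j' :: x :=
                        Beq.cons j' (Beq.cons i' (beq_braid hjj.symm x))
                    _ ≋ i' :: j' :: i' :: j :: j' :: x := beq_braid hadj.symm (j :: j' :: x)
            · -- far j' j
              obtain ⟨w, hTw, hv₁⟩ := F hjj
              refine ⟨?_, ?_, ?_⟩
              · rintro rfl; exact (V2 hjj.symm hadj).elim
              · rintro hij
                obtain ⟨-, Fb, -⟩ := KEY _ _ hlq hTw i' j (j' :: q) w rfl rfl
                obtain ⟨t, h2, hwt⟩ := Fb hij
                have hl2 : (j' :: q).length ≤ N := by simp at hlen ⊢; omega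
                obtain ⟨-, Fc, -⟩ := KEY _ _ hl2 h2 j' j q t rfl rfl
                obtain ⟨s, hqs, hts⟩ := Fc hjj
                refine ⟨j' :: i' :: s, ?_, ?_⟩
                · calc (j' :: i' :: q : W) ≋ j' :: i' :: j :: s :=
                        Beq.cons j' (Beq.cons i' hqs)
                    _ ≋ j' :: j :: i' :: s := Beq.cons j' (beq_comm hij s)
                    _ ≋ j :: j' :: i' :: s := beq_comm hjj (i' :: s)
                · calc v₁ ≋ j' :: w := hv₁
                    _ ≋ j' :: i' :: t := Beq.cons j' hwt
                    _ ≋ j' :: i' :: j' :: s := Beq.cons j' (Beq.cons i' hts)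
                    _ ≋ i' :: j' :: i' :: s := beq_braid hadj.symm s
              · rintro hij
                obtain ⟨-, -, Ab⟩ := KEY _ _ hlq hTw i' j (j' :: q) w rfl rfl
                obtain ⟨t, h2, hwt⟩ := Ab hij
                have hl2 : (j' :: q).length ≤ N := by simp at hlen ⊢; omega
                obtain ⟨-, Fc, -⟩ := KEY _ _ hl2 h2 j' j q (i' :: t) rfl rfl
                obtain ⟨s, hqs, h3⟩ := Fc hjj
                have hl3 : (i' :: t).length ≤ N := by
                  have := h2.length; simp at this hl2 ⊢; omega
                obtain ⟨-, -, Ad⟩ := KEY _ _ hl3 h3 i' j' t s rfl rfl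
                obtain ⟨p, htp, hsp⟩ := Ad hadj
                refine ⟨j' :: i' :: j :: p, ?_, ?_⟩
                · calc (j' :: i' :: q : W) ≋ j' :: i' :: j :: s :=
                        Beq.cons j' (Beq.cons i' hqs)
                    _ ≋ j' :: i' :: j :: i' :: j' :: p :=
                        Beq.cons j' (Beq.cons i' (Beq.cons j hsp))
                    _ ≋ j' :: j :: i' :: j :: j' :: p :=
                        Beq.cons j' (beq_braid hij (j' :: p))
                    _ ≋ j :: j' :: i' :: j :: j' :: p := beq_comm hjj (i' :: j :: j' :: p)
                    _ ≋ j :: j' :: i' :: j' :: j :: p :=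
                        Beq.cons j (Beq.cons j' (Beq.cons i' (beq_comm hjj.symm p)))
                    _ ≋ j :: i' :: j' :: i' :: j :: p :=
                        Beq.cons j (beq_braid hadj.symm (j :: p))
                · calc v₁ ≋ j' :: w := hv₁
                    _ ≋ j' :: i' :: j :: t := Beq.cons j' hwt
                    _ ≋ j' :: i' :: j :: j' :: i' :: p :=
                        Beq.cons j' (Beq.cons i' (Beq.cons j htp))
                    _ ≋ j' :: i' :: j' :: j :: i' :: p :=
                        Beq.cons j' (Beq.cons i' (beq_comm hjj.symm (i' :: p)))
                    _ ≋ i' :: j' :: i' :: j :: i' :: p := beq_braid hadj.symm (j :: i' :: p)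
                    _ ≋ i' :: j' :: j :: i' :: j :: p :=
                        Beq.cons i' (Beq.cons j' (beq_braid hij p))
                    _ ≋ i' :: j :: j' :: i' :: j :: p :=
                        Beq.cons i' (beq_comm hjj (i' :: j :: p))

/-! ### Divisibility and conditional lcms -/

theorem key' {u v : W} (h : Beq u v) {i j : ℕ} {u₁ v₁ : W}
    (hu : u = i :: u₁) (hv : v = j :: v₁) :
    (i = j → Beq u₁ v₁) ∧
    (far i j → ∃ w, Beq u₁ (j :: w) ∧ Beq v₁ (i :: w)) ∧
    (adj i j → ∃ w, Beq u₁ (j :: i :: w) ∧ Beq v₁ (i :: j :: w)) :=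
  key u.length u v le_rfl h i j u₁ v₁ hu hv

theorem cancel_cons {i : ℕ} {u v : W} (h : Beq (i :: u) (i :: v)) : Beq u v :=
  (key' h rfl rfl).1 rfl

theorem cancel_append {a u v : W} (h : Beq (a ++ u) (a ++ v)) : Beq u v := by
  induction a with
  | nil => simpa using h
  | cons i a ih => exact ih (cancel_cons h)

/-- `u` left-divides `h` (up to braid equivalence). -/
def Ldvd (u h : W) : Prop := ∃ t, Beq (u ++ t) h

local infix:50 " ≼ " => Ldvd

lemma Ldvd.refl (u : W) : u ≼ u := ⟨[], by simp⟩

lemma Beq.ldvd {u v : W} (h : Beq u v) : u ≼ v := ⟨[], by simpa using h⟩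

lemma Ldvd.trans {u v w : W} (h : u ≼ v) (h' : v ≼ w) : u ≼ w := by
  obtain ⟨t, ht⟩ := h; obtain ⟨s, hs⟩ := h'
  exact ⟨t ++ s, by rw [← List.append_assoc]; exact (ht.append_right s).rtrans hs⟩

lemma Ldvd.of_beq_left {u u' h : W} (e : Beq u' u) (d : u ≼ h) : u' ≼ h :=
  e.ldvd.trans d

lemma Ldvd.of_beq_right {u h h' : W} (d : u ≼ h) (e : Beq h h') : u ≼ h' :=
  d.trans e.ldvd

lemma nil_ldvd (h : W) : ([] : W) ≼ h := ⟨h, by simp⟩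

lemma Ldvd.cons {u h : W} (i : ℕ) (d : u ≼ h) : (i :: u) ≼ (i :: h) := by
  obtain ⟨t, ht⟩ := d; exact ⟨t, Beq.cons i ht⟩

lemma Ldvd.of_cons {i : ℕ} {u h : W} (d : (i :: u) ≼ (i :: h)) : u ≼ h := by
  obtain ⟨t, ht⟩ := d; exact ⟨t, cancel_cons ht⟩

lemma head_ldvd {i : ℕ} {h : W} (d : [i] ≼ h) : ∃ x, Beq h (i :: x) := by
  obtain ⟨t, ht⟩ := d; exact ⟨t, ht.symm⟩

/-- Conditional lcm of a generator and a word. -/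
theorem singLcm : ∀ N (h : W), h.length ≤ N → ∀ (i : ℕ) (v : W), [i] ≼ h → v ≼ h →
    ∃ c, [i] ≼ c ∧ v ≼ c ∧ c ≼ h ∧ ∀ h', [i] ≼ h' → v ≼ h' → c ≼ h' := by
  intro N
  induction N with
  | zero =>
    rintro h hlen i v ⟨t, ht⟩ -
    have h1 := ht.length
    simp at h1
    omega
  | succ N IH =>
    rintro h hlen i v hi hv
    rcases v with - | ⟨j, v'⟩
    · exact ⟨[i], .refl _, nil_ldvd _, hi, fun h' hi' _ => hi'⟩
    rcases rel3 i j with rfl | hij | hij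
    · exact ⟨i :: v', ⟨v', by simp⟩, .refl _, hv, fun h' _ hv' => hv'⟩
    · -- adj i j
      obtain ⟨x, hx⟩ := head_ldvd hi
      obtain ⟨s, hs⟩ := hv
      have c1 : Beq (i :: x) (j :: (v' ++ s)) := hx.symm.rtrans hs.symm
      obtain ⟨-, -, A⟩ := key' c1 rfl rfl
      obtain ⟨w, hxw, hyw⟩ := A hij
      have hh : Beq h (j :: i :: j :: w) := hs.symm.rtrans (Beq.cons j hyw)
      have hv'h1 : v' ≼ (i :: j :: w) := ⟨s, hyw⟩
      have hih1 : [i] ≼ (i :: j :: w) := ⟨j :: w, by simp⟩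
      have hlen1 : (i :: j :: w).length ≤ N := by
        have := hh.length; simp at this hlen ⊢; omega
      obtain ⟨c₁, hic, hvc, hch, leastc⟩ := IH _ hlen1 i v' hih1 hv'h1
      obtain ⟨d, hd⟩ := hic
      have hdjw : d ≼ (j :: w) := by
        obtain ⟨t2, ht2⟩ := hch
        exact ⟨t2, cancel_cons ((hd.append_right t2).rtrans ht2)⟩
      have hjjw : [j] ≼ (j :: w) := ⟨w, by simp⟩
      have hlen2 : (j :: w).length ≤ N := by
        have := hh.length; simp at this hlen ⊢; omega
      obtain ⟨c₂, hjc2, hdc2, hc2h, leastc2⟩ := IH _ hlen2 j d hjjw hdjw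
      obtain ⟨e, he⟩ := hjc2
      refine ⟨j :: i :: c₂, ?_, ?_, ?_, ?_⟩
      · exact ⟨j :: i :: e, (beq_braid hij e).rtrans (Beq.cons j (Beq.cons i he))⟩
      · exact Ldvd.cons j (hvc.trans (Ldvd.of_beq_left hd.symm (Ldvd.cons i hdc2)))
      · obtain ⟨t3, ht3⟩ := hc2h
        exact ⟨t3, (Beq.cons j (Beq.cons i ht3)).rtrans hh.symm⟩
      · rintro h' hi' hv'
        obtain ⟨x', hx'⟩ := head_ldvd hi'
        obtain ⟨s', hs'⟩ := hv'
        have c2 : Beq (i :: x') (j :: (v' ++ s')) := hx'.symm.rtrans hs'.symm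
        obtain ⟨-, -, A2⟩ := key' c2 rfl rfl
        obtain ⟨w', hxw', hyw'⟩ := A2 hij
        have h1 : c₁ ≼ (i :: j :: w') := leastc _ ⟨j :: w', by simp⟩ ⟨s', hyw'⟩
        have h2 : d ≼ (j :: w') := by
          obtain ⟨t4, ht4⟩ := h1
          exact ⟨t4, cancel_cons ((hd.append_right t4).rtrans ht4)⟩
        have h3 : c₂ ≼ (j :: w') := leastc2 _ ⟨w', by simp⟩ h2
        obtain ⟨t5, ht5⟩ := h3
        exact ⟨t5, (Beq.cons j (Beq.cons i ht5)).rtrans ((Beq.cons j hyw').symm.rtrans hs')⟩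
    · -- far i j
      obtain ⟨x, hx⟩ := head_ldvd hi
      obtain ⟨s, hs⟩ := hv
      have c1 : Beq (i :: x) (j :: (v' ++ s)) := hx.symm.rtrans hs.symm
      obtain ⟨-, F, -⟩ := key' c1 rfl rfl
      obtain ⟨w, hxw, hyw⟩ := F hij
      have hh : Beq h (j :: i :: w) := hs.symm.rtrans (Beq.cons j hyw)
      have hv'h1 : v' ≼ (i :: w) := ⟨s, hyw⟩
      have hih1 : [i] ≼ (i :: w) := ⟨w, by simp⟩
      have hlen1 : (i :: w).length ≤ N := by
        have := hh.length; simp at this hlen ⊢; omega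
      obtain ⟨L', hiL', hvL', hL'h, least'⟩ := IH _ hlen1 i v' hih1 hv'h1
      obtain ⟨d, hd⟩ := hiL'
      refine ⟨j :: L', ?_, Ldvd.cons j hvL', ?_, ?_⟩
      · exact ⟨j :: d, (beq_comm hij d).rtrans (Beq.cons j hd)⟩
      · obtain ⟨t2, ht2⟩ := hL'h
        exact ⟨t2, (Beq.cons j ht2).rtrans hh.symm⟩
      · rintro h' hi' hv'
        obtain ⟨x', hx'⟩ := head_ldvd hi'
        obtain ⟨s', hs'⟩ := hv'
        have c2 : Beq (i :: x') (j :: (v' ++ s')) := hx'.symm.rtrans hs'.symm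
        obtain ⟨-, F2, -⟩ := key' c2 rfl rfl
        obtain ⟨w', hxw', hyw'⟩ := F2 hij
        have h1 : L' ≼ (i :: w') := least' _ ⟨w', by simp⟩ ⟨s', hyw'⟩
        obtain ⟨t3, ht3⟩ := h1
        exact ⟨t3, (Beq.cons j ht3).rtrans ((Beq.cons j hyw').symm.rtrans hs')⟩

/-- Conditional lcm: any two words with a common multiple have an lcm. -/
theorem condLcm : ∀ (u : W) (h : W) (v : W), u ≼ h → v ≼ h →
    ∃ L, u ≼ L ∧ v ≼ L ∧ L ≼ h ∧ ∀ h', u ≼ h' → v ≼ h' → L ≼ h' := by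
  intro u
  induction u with
  | nil => intro h v _ hv; exact ⟨v, nil_ldvd v, .refl v, hv, fun h' _ hv' => hv'⟩
  | cons i u' ih =>
    intro h v hu hv
    have hi : [i] ≼ h := by obtain ⟨t, ht⟩ := hu; exact ⟨u' ++ t, ht⟩
    obtain ⟨c, hic, hvc, hch, leastc⟩ := singLcm h.length h le_rfl i v hi hv
    obtain ⟨d, hd⟩ := hic
    obtain ⟨x, hx⟩ := head_ldvd hi
    have hu'x : u' ≼ x := by obtain ⟨t, ht⟩ := hu; exact ⟨t, cancel_cons (ht.rtrans hx)⟩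
    have hdx : d ≼ x := by
      obtain ⟨t, ht⟩ := hch
      exact ⟨t, cancel_cons ((hd.append_right t).rtrans (ht.rtrans hx))⟩
    obtain ⟨L', hu'L', hdL', hL'x, least'⟩ := ih x d hu'x hdx
    refine ⟨i :: L', Ldvd.cons i hu'L', ?_, ?_, ?_⟩
    · exact hvc.trans (Ldvd.of_beq_left hd.symm (Ldvd.cons i hdL'))
    · obtain ⟨t, ht⟩ := hL'x
      exact ⟨t, (Beq.cons i ht).rtrans hx.symm⟩
    · rintro h' hu' hv'
      have hi' : [i] ≼ h' := by obtain ⟨t, ht⟩ := hu'; exact ⟨u' ++ t, ht⟩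
      obtain ⟨x', hx'⟩ := head_ldvd hi'
      have hcx' : c ≼ h' := leastc h' hi' hv'
      have hdx' : d ≼ x' := by
        obtain ⟨t, ht⟩ := hcx'
        exact ⟨t, cancel_cons ((hd.append_right t).rtrans (ht.rtrans hx'))⟩
      have hu'x' : u' ≼ x' := by obtain ⟨t, ht⟩ := hu'; exact ⟨t, cancel_cons (ht.rtrans hx')⟩
      obtain ⟨t, ht⟩ := least' x' hu'x' hdx'
      exact ⟨t, (Beq.cons i ht).rtrans hx'.symm⟩

/-! ### The Garside element Δ -/

def desc : ℕ → W
  | 0 => []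
  | m + 1 => m :: desc m

def asc (m : ℕ) : W := (desc m).reverse

def Δw : ℕ → W
  | 0 => []
  | m + 1 => asc (m + 1) ++ Δw m

def sh (u : W) : W := u.map (· + 1)

def pw (u : W) : ℕ → W
  | 0 => []
  | k + 1 => u ++ pw u k

lemma desc_mem {m x : ℕ} (h : x ∈ desc m) : x < m := by
  induction m with
  | zero => simp [desc] at h
  | succ m ih =>
    rcases List.mem_cons.1 h with rfl | h
    · omega
    · exact lt_trans (ih h) (by omega)

lemma asc_mem {m x : ℕ} (h : x ∈ asc m) : x < m := desc_mem (by simpa [asc] using h)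

lemma Δw_mem : ∀ {m x : ℕ}, x ∈ Δw m → x < m := by
  intro m
  induction m with
  | zero => intro x h; simp [Δw] at h
  | succ m ih =>
    intro x h
    rcases List.mem_append.1 h with h | h
    · exact asc_mem h
    · exact lt_trans (ih h) (by omega)

lemma desc_shift : ∀ m, desc (m + 1) = sh (desc m) ++ [0] := by
  intro m
  induction m with
  | zero => rfl
  | succ m ih => show (m+1) :: desc (m+1) = sh (m :: desc m) ++ [0]
                 rw [ih]; simp [sh]

lemma asc_zero_cons (m : ℕ) : asc (m + 1) = 0 :: sh (asc m) := by
  have : sh (asc m) = (sh (desc m)).reverse := by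
    simp [asc, sh, List.map_reverse]
  rw [asc, desc_shift, List.reverse_append, this]
  rfl

lemma asc_succ (m : ℕ) : asc (m + 1) = asc m ++ [m] := by
  simp [asc, desc]

lemma Bstep.rev {u v : W} (h : Bstep u v) : Bstep u.reverse v.reverse := by
  cases h with
  | comm a b i j h =>
      have e1 : (a ++ i :: j :: b).reverse = b.reverse ++ j :: i :: a.reverse := by simp
      have e2 : (a ++ j :: i :: b).reverse = b.reverse ++ i :: j :: a.reverse := by simp
      rw [e1, e2]; exact .comm _ _ j i h.symm
  | braid a b i j h =>
      have e1 : (a ++ i :: j :: i :: b).reverse = b.reverse ++ i :: j :: i :: a.reverse := by simp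
      have e2 : (a ++ j :: i :: j :: b).reverse = b.reverse ++ j :: i :: j :: a.reverse := by simp
      rw [e1, e2]; exact .braid _ _ i j h

lemma Beq.rev {u v : W} (h : Beq u v) : Beq u.reverse v.reverse := by
  induction h with
  | refl => rfl
  | tail _ h ih => exact ih.rtrans h.rev.beq

lemma Bstep.shift {u v : W} (h : Bstep u v) : Bstep (sh u) (sh v) := by
  cases h with
  | comm a b i j h =>
      have e1 : sh (a ++ i :: j :: b) = sh a ++ (i+1) :: (j+1) :: sh b := by simp [sh]
      have e2 : sh (a ++ j :: i :: b) = sh a ++ (j+1) :: (i+1) :: sh b := by simp [sh]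
      rw [e1, e2]
      exact .comm _ _ _ _ (by unfold far at *; omega)
  | braid a b i j h =>
      have e1 : sh (a ++ i :: j :: i :: b) = sh a ++ (i+1) :: (j+1) :: (i+1) :: sh b := by
        simp [sh]
      have e2 : sh (a ++ j :: i :: j :: b) = sh a ++ (j+1) :: (i+1) :: (j+1) :: sh b := by
        simp [sh]
      rw [e1, e2]
      exact .braid _ _ _ _ (by unfold adj at *; omega)

lemma Beq.shift {u v : W} (h : Beq u v) : Beq (sh u) (sh v) := by
  induction h with
  | refl => rfl
  | tail _ h ih => exact ih.rtrans h.shift.beq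

lemma commute_word {c : ℕ} : ∀ {w : W}, (∀ x ∈ w, far c x) → Beq (c :: w) (w ++ [c])
  | [], _ => by simp
  | x :: w', h => by
      calc (c :: x :: w' : W) ≋ x :: c :: w' := beq_comm (h x (by simp)) w'
        _ ≋ x :: (w' ++ [c]) := Beq.cons x (commute_word (fun y hy => h y (by simp [hy])))

lemma C1 : ∀ m a, a + 2 ≤ m → Beq (a :: desc m) (desc m ++ [a + 1]) := by
  intro m
  induction m with
  | zero => intro a ha; omega
  | succ m ih =>
    intro a ha
    rcases Nat.lt_or_ge (a + 2) (m + 1) with h | h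
    · calc (a :: m :: desc m : W) ≋ m :: a :: desc m :=
            beq_comm (Or.inl (by omega)) (desc m)
        _ ≋ m :: (desc m ++ [a + 1]) := Beq.cons m (ih a (by omega))
    · -- m = a + 1
      obtain rfl : m = a + 1 := by omega
      show Beq (a :: (a+1) :: a :: desc a) (((a+1) :: a :: desc a) ++ [a+1])
      calc (a :: (a+1) :: a :: desc a : W)
          ≋ (a+1) :: a :: (a+1) :: desc a := beq_braid (Or.inl rfl) (desc a)
        _ ≋ (a+1) :: a :: (desc a ++ [a+1]) :=
            Beq.cons _ (Beq.cons _ (commute_word (fun x hx => Or.inr (by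
              have := desc_mem hx; omega))))
        _ ≋ ((a+1) :: a :: desc a) ++ [a+1] := by simp

lemma C2 (m a : ℕ) (h : a + 2 ≤ m) : Beq (asc m ++ [a]) ((a + 1) :: asc m) := by
  have := (C1 m a h).rev
  simp only [List.reverse_cons, List.reverse_append] at this
  simpa [asc] using this

lemma R2 : ∀ m, Beq (Δw (m + 1)) (Δw m ++ desc (m + 1)) := by
  intro m
  induction m with
  | zero => simp [Δw, desc, asc]
  | succ m ih =>
    show Beq (asc (m+2) ++ Δw (m+1)) _
    calc (asc (m+2) ++ Δw (m+1) : W)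
        ≋ asc (m+2) ++ (Δw m ++ desc (m+1)) := ih.append_left _
      _ = (asc (m+1) ++ [m+1]) ++ Δw m ++ desc (m+1) := by rw [asc_succ]; simp
      _ ≋ asc (m+1) ++ (Δw m ++ [m+1]) ++ desc (m+1) := by
          have : Beq ((m+1) :: Δw m) (Δw m ++ [m+1]) :=
            commute_word (fun x hx => Or.inr (by have := Δw_mem hx; omega))
          simpa using (this.context (asc (m+1)) (desc (m+1)))
      _ = Δw (m+1) ++ ((m+1) :: desc (m+1)) := by show _ = (asc (m+1) ++ Δw m) ++ _; simp
      _ = Δw (m+1) ++ desc (m+2) := rfl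

lemma Lm : ∀ m, Beq (asc (m + 1) ++ desc m) (desc (m + 1) ++ sh (asc m)) := by
  intro m
  induction m with
  | zero => simp [asc, desc, sh]
  | succ m ih =>
    rcases m with - | m
    · -- claim at 1 : [0,1,0] ≋ [1,0,1]
      exact beq_braid (Or.inl rfl) []
    · -- claim at m+2 using claim at m+1
      have sh_ih := ih.shift
      have e1 : asc (m + 3) ++ desc (m + 2) =
          0 :: (sh (asc (m+2) ++ desc (m+1)) ++ [0]) := by
        rw [asc_zero_cons, desc_shift]; simp [sh]
      have e2 : sh (asc (m+2) ++ desc (m+1)) ≋ sh (desc (m+2) ++ sh (asc (m+1))) :=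
        Beq.shift ih
      have e3 : sh (desc (m+2) ++ sh (asc (m+1))) =
          sh (sh (desc (m+1))) ++ [1] ++ sh (sh (asc (m+1))) := by
        rw [desc_shift]; simp [sh]
      have e4 : desc (m + 3) ++ sh (asc (m + 2)) =
          sh (sh (desc (m+1))) ++ [1] ++ [0] ++ [1] ++ sh (sh (asc (m+1))) := by
        rw [desc_shift, desc_shift, asc_zero_cons]; simp [sh]
      rw [e1, e4]
      have mem1 : ∀ x ∈ sh (sh (desc (m+1))), far 0 x := by
        intro x hx
        simp only [sh, List.map_map, List.mem_map, Function.comp] at hx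
        obtain ⟨y, -, rfl⟩ := hx
        exact Or.inl (by omega)
      have mem2 : ∀ x ∈ sh (sh (asc (m+1))), far 0 x := by
        intro x hx
        simp only [sh, List.map_map, List.mem_map, Function.comp] at hx
        obtain ⟨y, -, rfl⟩ := hx
        exact Or.inl (by omega)
      calc (0 :: (sh (asc (m+2) ++ desc (m+1)) ++ [0]) : W)
          ≋ 0 :: ((sh (sh (desc (m+1))) ++ [1] ++ sh (sh (asc (m+1)))) ++ [0]) := by
            have := (e2.rtrans (by rw [e3])).append_right [0]
            exact Beq.cons 0 this
        _ = 0 :: sh (sh (desc (m+1))) ++ ([1] ++ (sh (sh (asc (m+1))) ++ [0])) := by simp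
        _ ≋ (sh (sh (desc (m+1))) ++ [0]) ++ ([1] ++ (sh (sh (asc (m+1))) ++ [0])) :=
            (commute_word mem1).append_right _
        _ = sh (sh (desc (m+1))) ++ ([0] ++ [1] ++ (sh (sh (asc (m+1))) ++ [0])) := by simp
        _ ≋ sh (sh (desc (m+1))) ++ ([0] ++ [1] ++ (0 :: sh (sh (asc (m+1))))) := by
            exact Beq.append_left _ (Beq.append_left _ (commute_word mem2).symm)
        _ = sh (sh (desc (m+1))) ++ (0 :: 1 :: 0 :: sh (sh (asc (m+1)))) := by simp
        _ ≋ sh (sh (desc (m+1))) ++ (1 :: 0 :: 1 :: sh (sh (asc (m+1)))) :=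
            Beq.append_left _ (beq_braid (Or.inl rfl) _)
        _ = sh (sh (desc (m+1))) ++ [1] ++ [0] ++ [1] ++ sh (sh (asc (m+1))) := by simp

lemma R3 : ∀ m, Beq (Δw (m + 1)) (desc (m + 1) ++ sh (Δw m)) := by
  intro m
  induction m with
  | zero => simp [Δw, desc, asc, sh]
  | succ m ih =>
    show Beq (asc (m+2) ++ Δw (m+1)) _
    calc (asc (m+2) ++ Δw (m+1) : W)
        ≋ asc (m+2) ++ (desc (m+1) ++ sh (Δw m)) := ih.append_left _
      _ = (asc (m+2) ++ desc (m+1)) ++ sh (Δw m) := by simp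
      _ ≋ (desc (m+2) ++ sh (asc (m+1))) ++ sh (Δw m) := (Lm (m+1)).append_right _
      _ = desc (m+2) ++ sh (asc (m+1) ++ Δw m) := by simp [sh]
      _ = desc (m+2) ++ sh (Δw (m+1)) := rfl

/-! ### Divisibility properties of Δ -/

lemma Ldvd.append_rt {u h : W} (d : u ≼ h) (b : W) : u ≼ (h ++ b) := by
  obtain ⟨t, ht⟩ := d
  exact ⟨t ++ b, by rw [← List.append_assoc]; exact ht.append_right b⟩

lemma E1 : ∀ m i, i < m → [i] ≼ Δw m := by
  intro m
  induction m with
  | zero => intro i hi; omega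
  | succ m ih =>
    intro i hi
    rcases Nat.lt_or_ge i m with h | h
    · exact Ldvd.of_beq_right ((ih i h).append_rt _) (R2 m).symm
    · obtain rfl : i = m := by omega
      exact ⟨desc i ++ sh (Δw i), (R3 i).symm⟩

lemma E2 : ∀ m, Beq (Δw m).reverse (Δw m) := by
  intro m
  induction m with
  | zero => simp [Δw]
  | succ m ih =>
    show Beq (asc (m+1) ++ Δw m).reverse _
    rw [List.reverse_append]
    have e : (asc (m+1)).reverse = desc (m+1) := by simp [asc]
    rw [e]
    exact (ih.append_right _).rtrans (R2 m).symm

lemma E3 : ∀ m i, i < m → ∃ j, j < m ∧ Beq (i :: Δw m) (Δw m ++ [j]) := by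
  intro m
  induction m with
  | zero => intro i hi; omega
  | succ m ih =>
    intro i hi
    rcases Nat.eq_zero_or_pos i with rfl | hpos
    · rcases Nat.eq_zero_or_pos m with rfl | hm
      · exact ⟨0, by omega, by simp [Δw, asc, desc]⟩
      · obtain ⟨j', hj', hq⟩ := ih 0 hm
        refine ⟨j' + 1, by omega, ?_⟩
        calc (0 :: Δw (m+1) : W) ≋ 0 :: (Δw m ++ desc (m+1)) := Beq.cons 0 (R2 m)
          _ = (0 :: Δw m) ++ desc (m+1) := by simp
          _ ≋ (Δw m ++ [j']) ++ desc (m+1) := hq.append_right _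
          _ = Δw m ++ (j' :: desc (m+1)) := by simp
          _ ≋ Δw m ++ (desc (m+1) ++ [j'+1]) :=
              Beq.append_left _ (C1 (m+1) j' (by omega))
          _ = (Δw m ++ desc (m+1)) ++ [j'+1] := by simp
          _ ≋ Δw (m+1) ++ [j'+1] := (R2 m).symm.append_right _
    · have hc2 := C2 (m+1) (i-1) (by omega)
      obtain ⟨j', hj', hq⟩ := ih (i-1) (by omega)
      refine ⟨j', by omega, ?_⟩
      have e : (i - 1) + 1 = i := by omega
      calc (i :: Δw (m+1) : W) = (i :: asc (m+1)) ++ Δw m := by simp [Δw]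
        _ ≋ (asc (m+1) ++ [i-1]) ++ Δw m := by
            rw [← e]; exact hc2.symm.append_right _
        _ = asc (m+1) ++ ((i-1) :: Δw m) := by simp
        _ ≋ asc (m+1) ++ (Δw m ++ [j']) := Beq.append_left _ hq
        _ = Δw (m+1) ++ [j'] := by simp [Δw]

lemma E3' (m i : ℕ) (hi : i < m) :
    ∃ j, j < m ∧ Beq (i :: Δw m) (Δw m ++ [j]) ∧ Beq (Δw m ++ [i]) (j :: Δw m) := by
  obtain ⟨j, hj, h1⟩ := E3 m i hi
  refine ⟨j, hj, h1, ?_⟩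
  have h2 := h1.rev
  simp only [List.reverse_cons, List.reverse_append, List.reverse_cons, List.reverse_nil,
    List.nil_append] at h2
  calc Δw m ++ [i] ≋ (Δw m).reverse ++ [i] := (E2 m).symm.append_right _
    _ ≋ j :: (Δw m).reverse := h2
    _ ≋ j :: Δw m := Beq.cons j (E2 m)

lemma comm_sq (m i : ℕ) (hi : i < m) :
    Beq (i :: (Δw m ++ Δw m)) ((Δw m ++ Δw m) ++ [i]) := by
  obtain ⟨j, hj, h1, h2⟩ := E3' m i hi
  calc (i :: (Δw m ++ Δw m) : W) = (i :: Δw m) ++ Δw m := by simp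
    _ ≋ (Δw m ++ [j]) ++ Δw m := h1.append_right _
    _ = Δw m ++ (j :: Δw m) := by simp
    _ ≋ Δw m ++ (Δw m ++ [i]) := Beq.append_left _ h2.symm
    _ = (Δw m ++ Δw m) ++ [i] := by simp

lemma central_sq (m : ℕ) : ∀ u : W, (∀ x ∈ u, x < m) →
    Beq (u ++ (Δw m ++ Δw m)) ((Δw m ++ Δw m) ++ u) := by
  intro u
  induction u with
  | nil => intro; simp
  | cons i u' ih =>
    intro hb
    calc ((i :: u') ++ (Δw m ++ Δw m) : W) = i :: (u' ++ (Δw m ++ Δw m)) := by simp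
      _ ≋ i :: ((Δw m ++ Δw m) ++ u') := Beq.cons i (ih (fun x hx => hb x (by simp [hx])))
      _ = (i :: (Δw m ++ Δw m)) ++ u' := by simp
      _ ≋ ((Δw m ++ Δw m) ++ [i]) ++ u' := (comm_sq m i (hb i (by simp))).append_right _
      _ = (Δw m ++ Δw m) ++ (i :: u') := by simp

lemma E3w (m : ℕ) : ∀ (u : W), (∀ x ∈ u, x < m) →
    ∃ u', (∀ x ∈ u', x < m) ∧ Beq (u ++ Δw m) (Δw m ++ u') := by
  intro u
  induction u with
  | nil => intro; exact ⟨[], by simp, by simp⟩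
  | cons i u' ih =>
    intro hb
    obtain ⟨u'', hb'', h⟩ := ih (fun x hx => hb x (by simp [hx]))
    obtain ⟨j, hj, h1⟩ := E3 m i (hb i (by simp))
    refine ⟨j :: u'', by simp; exact ⟨hj, hb''⟩, ?_⟩
    calc ((i :: u') ++ Δw m : W) = i :: (u' ++ Δw m) := by simp
      _ ≋ i :: (Δw m ++ u'') := Beq.cons i h
      _ = (i :: Δw m) ++ u'' := by simp
      _ ≋ (Δw m ++ [j]) ++ u'' := h1.append_right _
      _ = Δw m ++ (j :: u'') := by simp

lemma E3pow (m : ℕ) : ∀ k (u : W), (∀ x ∈ u, x < m) →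
    ∃ u', (∀ x ∈ u', x < m) ∧ Beq (u ++ pw (Δw m) k) (pw (Δw m) k ++ u') := by
  intro k
  induction k with
  | zero => intro u hb; exact ⟨u, hb, by simp [pw]⟩
  | succ k ih =>
    intro u hb
    obtain ⟨u₁, hb₁, h1⟩ := E3w m u hb
    obtain ⟨u₂, hb₂, h2⟩ := ih u₁ hb₁
    refine ⟨u₂, hb₂, ?_⟩
    show Beq (u ++ (Δw m ++ pw (Δw m) k)) ((Δw m ++ pw (Δw m) k) ++ u₂)
    calc u ++ (Δw m ++ pw (Δw m) k) = (u ++ Δw m) ++ pw (Δw m) k := by simp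
      _ ≋ (Δw m ++ u₁) ++ pw (Δw m) k := h1.append_right _
      _ = Δw m ++ (u₁ ++ pw (Δw m) k) := by simp
      _ ≋ Δw m ++ (pw (Δw m) k ++ u₂) := Beq.append_left _ h2
      _ = (Δw m ++ pw (Δw m) k) ++ u₂ := by simp

lemma pw_add (u : W) : ∀ a b, pw u (a + b) = pw u a ++ pw u b := by
  intro a
  induction a with
  | zero => intro b; simp [pw]
  | succ a ih =>
    intro b
    have e : a + 1 + b = (a + b) + 1 := by omega
    rw [e]
    show u ++ pw u (a + b) = (u ++ pw u a) ++ pw u b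
    rw [ih]; simp

lemma pw_comm (u : W) : ∀ k, pw u k ++ u = u ++ pw u k := by
  intro k
  induction k with
  | zero => simp [pw]
  | succ k ih => show (u ++ pw u k) ++ u = _; rw [List.append_assoc, ih]; rfl

lemma mem_of_beq_delta {m i : ℕ} {a : W} (h : Beq (Δw m) (i :: a)) :
    ∀ x ∈ a, x < m := by
  intro x hx
  exact Δw_mem (h.mem (by simp [hx]))

lemma D3 (m : ℕ) : ∀ (p : W), (∀ x ∈ p, x < m) → p ≼ pw (Δw m) p.length := by
  intro p
  induction p with
  | nil => intro; exact ⟨[], by simp [pw]⟩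
  | cons i p' ih =>
    intro hb
    obtain ⟨t0, ht0⟩ := ih (fun x hx => hb x (by simp [hx]))
    obtain ⟨a, ha⟩ := head_ldvd (E1 m i (hb i (by simp)))
    obtain ⟨a', hba', haa'⟩ := E3pow m p'.length a (mem_of_beq_delta ha)
    have hPa : pw (Δw m) p'.length ≼ (a ++ pw (Δw m) p'.length) := ⟨a', haa'.symm⟩
    obtain ⟨s, hs⟩ := Ldvd.trans ⟨t0, ht0⟩ hPa
    refine ⟨s, ?_⟩
    show Beq (i :: (p' ++ s)) (pw (Δw m) (p'.length + 1))
    have : pw (Δw m) (p'.length + 1) = Δw m ++ pw (Δw m) p'.length := rfl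
    rw [this]
    calc (i :: (p' ++ s) : W) ≋ i :: (a ++ pw (Δw m) p'.length) := Beq.cons i hs
      _ = (i :: a) ++ pw (Δw m) p'.length := by simp
      _ ≋ Δw m ++ pw (Δw m) p'.length := ha.symm.append_right _

lemma D3' (m : ℕ) (p : W) (hb : ∀ x ∈ p, x < m) (k : ℕ) (hk : p.length ≤ k) :
    p ≼ pw (Δw m) k := by
  have : k = p.length + (k - p.length) := by omega
  rw [this, pw_add]
  exact (D3 m p hb).append_rt _

lemma rev_pw (m : ℕ) : ∀ k, Beq (pw (Δw m) k).reverse (pw (Δw m) k) := by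
  intro k
  induction k with
  | zero => simp [pw]
  | succ k ih =>
    show Beq (Δw m ++ pw (Δw m) k).reverse _
    rw [List.reverse_append]
    calc (pw (Δw m) k).reverse ++ (Δw m).reverse
        ≋ pw (Δw m) k ++ (Δw m).reverse := ih.append_right _
      _ ≋ pw (Δw m) k ++ Δw m := Beq.append_left _ (E2 m)
      _ = Δw m ++ pw (Δw m) k := pw_comm _ _
      _ = pw (Δw m) (k+1) := rfl

lemma D3r (m : ℕ) (p : W) (hb : ∀ x ∈ p, x < m) (k : ℕ) (hk : p.length ≤ k) :
    ∃ c, Beq (c ++ p) (pw (Δw m) k) := by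
  have hbr : ∀ x ∈ p.reverse, x < m := fun x hx => hb x (by simpa using hx)
  obtain ⟨t, ht⟩ := D3' m p.reverse hbr k (by simpa using hk)
  have := ht.rev
  rw [List.reverse_append, List.reverse_reverse] at this
  exact ⟨t.reverse, this.rtrans (rev_pw m k)⟩

/-! ### The braid monoid on `Fin m` and its embedding into the braid group -/

def wv {m : ℕ} (u : FreeMonoid (Fin m)) : W := u.toList.map Fin.val

lemma wv_mul {m : ℕ} (u v : FreeMonoid (Fin m)) : wv (u * v) = wv u ++ wv v := by
  simp [wv, FreeMonoid.toList_mul]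

lemma wv_bdd {m : ℕ} (u : FreeMonoid (Fin m)) : ∀ x ∈ wv u, x < m := by
  intro x hx
  simp only [wv, List.mem_map] at hx
  obtain ⟨i, -, rfl⟩ := hx
  exact i.2

def bcon (m : ℕ) : Con (FreeMonoid (Fin m)) :=
  { toSetoid := ⟨fun u v => Beq (wv u) (wv v), ⟨fun _ => Beq.refl _, Beq.symm, Beq.rtrans⟩⟩
    mul' := fun {w x y z} h h' => by
      show Beq (wv (w * y)) (wv (x * z))
      rw [wv_mul, wv_mul]
      exact h.append h' }

lemma bcon_iff {m : ℕ} {u v : FreeMonoid (Fin m)} : bcon m u v ↔ Beq (wv u) (wv v) :=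
  Iff.rfl

abbrev QM (m : ℕ) := (bcon m).Quotient

def mkQ {m : ℕ} : FreeMonoid (Fin m) →* QM m := (bcon m).mk'

def genQ {m : ℕ} (i : Fin m) : QM m := mkQ (FreeMonoid.of i)

def pull (m : ℕ) (w : W) (h : ∀ x ∈ w, x < m) : FreeMonoid (Fin m) :=
  FreeMonoid.ofList (w.attach.map fun x => (⟨x.1, h x.1 x.2⟩ : Fin m))

lemma wv_pull (m : ℕ) (w : W) (h : ∀ x ∈ w, x < m) : wv (pull m w h) = w := by
  simp [wv, pull, FreeMonoid.toList_ofList, List.map_map, Function.comp]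

theorem cancel_append_right {u v a : W} (h : Beq (u ++ a) (v ++ a)) : Beq u v := by
  have h2 := h.rev
  rw [List.reverse_append, List.reverse_append] at h2
  have h4 := (cancel_append h2).rev
  simpa using h4

lemma q_left_cancel {m : ℕ} {a b c : QM m} (h : a * b = a * c) : b = c := by
  induction a using Con.induction_on with | H x =>
  induction b using Con.induction_on with | H y =>
  induction c using Con.induction_on with | H z =>
  have h1 : (bcon m) (x * y) (x * z) := ((bcon m).eq).1 h
  have hw : Beq (wv x ++ wv y) (wv x ++ wv z) := by
    rw [← wv_mul, ← wv_mul]; exact h1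
  exact ((bcon m).eq).2 (cancel_append hw)

lemma q_right_cancel {m : ℕ} {a b c : QM m} (h : b * a = c * a) : b = c := by
  induction a using Con.induction_on with | H x =>
  induction b using Con.induction_on with | H y =>
  induction c using Con.induction_on with | H z =>
  have h1 : (bcon m) (y * x) (z * x) := ((bcon m).eq).1 h
  have hw : Beq (wv y ++ wv x) (wv z ++ wv x) := by
    rw [← wv_mul, ← wv_mul]; exact h1
  exact ((bcon m).eq).2 (cancel_append_right hw)

lemma pw_bdd (m : ℕ) : ∀ k, ∀ x ∈ pw (Δw m) k, x < m := by
  intro k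
  induction k with
  | zero => intro x hx; simp [pw] at hx
  | succ k ih =>
    intro x hx
    rcases List.mem_append.1 hx with hx | hx
    · exact Δw_mem hx
    · exact ih x hx

lemma q_ore {m : ℕ} (r s : QM m) : ∃ r' s' : QM m, r' * r = s' * s := by
  induction r using Con.induction_on with | H x =>
  induction s using Con.induction_on with | H y =>
  set k := max (wv x).length (wv y).length with hk
  obtain ⟨c, hc⟩ := D3r m (wv x) (wv_bdd x) k (le_max_left _ _)
  obtain ⟨d, hd⟩ := D3r m (wv y) (wv_bdd y) k (le_max_right _ _)
  have hcb : ∀ t ∈ c, t < m := fun t ht => pw_bdd m k t (hc.symm.mem (by simp [ht]))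
  have hdb : ∀ t ∈ d, t < m := fun t ht => pw_bdd m k t (hd.symm.mem (by simp [ht]))
  refine ⟨(↑(pull m c hcb) : QM m), (↑(pull m d hdb) : QM m), ?_⟩
  show ((pull m c hcb : FreeMonoid (Fin m)) : QM m) * ↑x = ↑(pull m d hdb) * ↑y
  rw [← Con.coe_mul, ← Con.coe_mul]
  apply ((bcon m).eq).2
  show Beq (wv (pull m c hcb * x)) (wv (pull m d hdb * y))
  rw [wv_mul, wv_mul, wv_pull, wv_pull]
  exact hc.rtrans hd.symm

noncomputable instance oreSetQM (m : ℕ) : OreLocalization.OreSet (⊤ : Submonoid (QM m)) where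
  ore_right_cancel r₁ r₂ s h := ⟨1, by simpa using q_right_cancel h⟩
  oreNum r s := (q_ore r s.1).choose_spec.choose
  oreDenom r s := ⟨(q_ore r s.1).choose, trivial⟩
  ore_eq r s := (q_ore r s.1).choose_spec.choose_spec

/-! ### The group side -/

abbrev Gp (m : ℕ) := PresentedGroup (braidRels m)

lemma rel_comm {m : ℕ} {i j : Fin m} (h : (i : ℕ) + 2 ≤ (j : ℕ)) :
    (PresentedGroup.of i : Gp m) * .of j = .of j * .of i := by
  have hr : FreeGroup.of i * FreeGroup.of j * (FreeGroup.of j * FreeGroup.of i)⁻¹ ∈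
      braidRels m := Or.inl ⟨i, j, h, rfl⟩
  have h1 : (PresentedGroup.mk (braidRels m))
      (FreeGroup.of i * FreeGroup.of j * (FreeGroup.of j * FreeGroup.of i)⁻¹) = 1 :=
    (QuotientGroup.eq_one_iff _).2 (Subgroup.subset_normalClosure hr)
  rw [map_mul, map_inv, map_mul, map_mul] at h1
  exact mul_inv_eq_one.1 h1

lemma rel_braid {m : ℕ} {i j : Fin m} (h : (i : ℕ) + 1 = (j : ℕ)) :
    (PresentedGroup.of i : Gp m) * .of j * .of i = .of j * .of i * .of j := by
  have hr : FreeGroup.of i * FreeGroup.of j * FreeGroup.of i *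
      (FreeGroup.of j * FreeGroup.of i * FreeGroup.of j)⁻¹ ∈ braidRels m :=
    Or.inr ⟨i, j, h, rfl⟩
  have h1 : (PresentedGroup.mk (braidRels m))
      (FreeGroup.of i * FreeGroup.of j * FreeGroup.of i *
        (FreeGroup.of j * FreeGroup.of i * FreeGroup.of j)⁻¹) = 1 :=
    (QuotientGroup.eq_one_iff _).2 (Subgroup.subset_normalClosure hr)
  rw [map_mul, map_inv, map_mul, map_mul, map_mul, map_mul] at h1
  exact mul_inv_eq_one.1 h1

def gfun (m : ℕ) (a : ℕ) : Gp m := if h : a < m then PresentedGroup.of ⟨a, h⟩ else 1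

def gw (m : ℕ) (w : W) : Gp m := (w.map (gfun m)).prod

lemma gw_append (m : ℕ) (a b : W) : gw m (a ++ b) = gw m a * gw m b := by
  simp [gw]

lemma gw_cons (m : ℕ) (i : ℕ) (a : W) : gw m (i :: a) = gfun m i * gw m a := by
  simp [gw]

lemma g_comm {m i j : ℕ} (hi : i < m) (hj : j < m) (h : far i j) :
    gfun m i * gfun m j = gfun m j * gfun m i := by
  rw [gfun, gfun, dif_pos hi, dif_pos hj]
  rcases h with h | h
  · exact rel_comm h
  · exact (rel_comm h).symm

lemma g_braid {m i j : ℕ} (hi : i < m) (hj : j < m) (h : adj i j) :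
    gfun m i * gfun m j * gfun m i = gfun m j * gfun m i * gfun m j := by
  rw [gfun, gfun, dif_pos hi, dif_pos hj]
  rcases h with h | h
  · exact rel_braid h
  · exact (rel_braid h).symm

lemma gw_step {m : ℕ} {u v : W} (h : Bstep u v) (hb : ∀ x ∈ u, x < m) :
    gw m u = gw m v := by
  cases h with
  | comm a b i j hf =>
    have hi : i < m := hb i (by simp)
    have hj : j < m := hb j (by simp)
    rw [gw_append, gw_append, gw_cons, gw_cons, gw_cons, gw_cons]
    have e1 : gfun m i * (gfun m j * gw m b) = gfun m i * gfun m j * gw m b :=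
      (mul_assoc _ _ _).symm
    have e2 : gfun m j * (gfun m i * gw m b) = gfun m j * gfun m i * gw m b :=
      (mul_assoc _ _ _).symm
    rw [e1, e2, g_comm hi hj hf]
  | braid a b i j hf =>
    have hi : i < m := hb i (by simp)
    have hj : j < m := hb j (by simp)
    rw [gw_append, gw_append, gw_cons, gw_cons, gw_cons, gw_cons, gw_cons, gw_cons]
    have e1 : gfun m i * (gfun m j * (gfun m i * gw m b)) =
        gfun m i * gfun m j * gfun m i * gw m b := by group
    have e2 : gfun m j * (gfun m i * (gfun m j * gw m b)) =
        gfun m j * gfun m i * gfun m j * gw m b := by group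
    rw [e1, e2, g_braid hi hj hf]

lemma gw_beq {m : ℕ} {u v : W} (h : Beq u v) (hb : ∀ x ∈ u, x < m) :
    gw m u = gw m v := by
  induction h with
  | refl => rfl
  | tail hs hstep ih =>
    have hbw : ∀ x ∈ _, x < m := fun x hx => hb x (Beq.mem hs hx)
    exact (ih).trans (gw_step hstep hbw)

lemma gfun_val {m : ℕ} (i : Fin m) : gfun m (i : ℕ) = PresentedGroup.of i := by
  simp [gfun, i.2]

lemma lift_eq_gw {m : ℕ} (w : FreeMonoid (Fin m)) :
    FreeMonoid.lift (fun i => (PresentedGroup.of i : Gp m)) w = gw m (wv w) := by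
  rw [FreeMonoid.lift_apply]
  simp only [gw, wv, List.map_map]
  congr 1
  apply List.map_congr_left
  intro a _
  exact (gfun_val a).symm

def πQ (m : ℕ) : QM m →* Gp m :=
  Con.lift _ (FreeMonoid.lift fun i => (PresentedGroup.of i : Gp m)) (by
    intro u v h
    rw [Con.ker_rel, lift_eq_gw, lift_eq_gw]
    exact gw_beq h (wv_bdd u))

lemma πQ_mkQ {m : ℕ} (x : FreeMonoid (Fin m)) :
    πQ m (mkQ x) = FreeMonoid.lift (fun i => (PresentedGroup.of i : Gp m)) x :=
  Con.lift_mk' _ _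

lemma πQ_gen {m : ℕ} (i : Fin m) : πQ m (genQ i) = PresentedGroup.of i := by
  rw [genQ, πQ_mkQ]
  simp

/-! ### Injectivity of `πQ` via Ore localization -/

noncomputable abbrev FF (m : ℕ) := OreLocalization (⊤ : Submonoid (QM m)) (QM m)

noncomputable def numQ (m : ℕ) : QM m →* FF m := OreLocalization.numeratorHom

noncomputable def uF {m : ℕ} (i : Fin m) : Units (FF m) :=
  (OreLocalization.numerator_isUnit (⟨genQ i, trivial⟩ : (⊤ : Submonoid (QM m)))).unit

lemma uF_coe {m : ℕ} (i : Fin m) : (uF i : FF m) = numQ m (genQ i) :=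
  IsUnit.unit_spec _

lemma uF_rels (m : ℕ) : ∀ r ∈ braidRels m,
    FreeGroup.lift (fun i => (uF i : Units (FF m))) r = 1 := by
  rintro r (⟨i, j, hij, rfl⟩ | ⟨i, j, hij, rfl⟩)
  · simp only [map_mul, map_inv, FreeGroup.lift_apply_of]
    rw [mul_inv_eq_one]
    apply Units.ext
    rw [Units.val_mul, Units.val_mul, uF_coe, uF_coe, ← map_mul, ← map_mul]
    congr 1
    apply ((bcon m).eq).2
    show Beq (wv (FreeMonoid.of i * FreeMonoid.of j)) (wv (FreeMonoid.of j * FreeMonoid.of i))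
    rw [wv_mul, wv_mul]
    exact beq_comm (Or.inl hij) []
  · simp only [map_mul, map_inv, FreeGroup.lift_apply_of]
    rw [mul_inv_eq_one]
    apply Units.ext
    rw [Units.val_mul, Units.val_mul, Units.val_mul, Units.val_mul, uF_coe, uF_coe,
      ← map_mul, ← map_mul, ← map_mul, ← map_mul]
    congr 1
    apply ((bcon m).eq).2
    show Beq (wv (FreeMonoid.of i * FreeMonoid.of j * FreeMonoid.of i))
      (wv (FreeMonoid.of j * FreeMonoid.of i * FreeMonoid.of j))
    rw [wv_mul, wv_mul, wv_mul, wv_mul]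
    exact beq_braid (Or.inl hij) []

noncomputable def ΦG (m : ℕ) : Gp m →* Units (FF m) :=
  PresentedGroup.toGroup (uF_rels m)

theorem πQ_inj (m : ℕ) : Function.Injective (πQ m) := by
  have hcomp : (Units.coeHom (FF m)).comp ((ΦG m).comp (πQ m)) = numQ m := by
    apply Con.lift_funext
    intro a
    induction a using FreeMonoid.inductionOn' with
    | one => simp [map_one]
    | of_mul i x ih =>
      rw [show ((FreeMonoid.of i * x : FreeMonoid (Fin m)) : QM m) =
        mkQ (FreeMonoid.of i) * ((x : QM m)) from rfl]
      rw [map_mul, map_mul, ih]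
      congr 1
      show (Units.coeHom (FF m)) ((ΦG m) ((πQ m) (genQ i))) = numQ m (mkQ (FreeMonoid.of i))
      rw [πQ_gen]
      show ((ΦG m (PresentedGroup.of i) : Units (FF m)) : FF m) = numQ m (genQ i)
      rw [ΦG, PresentedGroup.toGroup.of]
      exact uF_coe i
  intro a b hab
  have h2 : numQ m a = numQ m b := by
    rw [← hcomp]
    simp only [MonoidHom.comp_apply, hab]
  rw [numQ] at h2
  rw [OreLocalization.numeratorHom_apply, OreLocalization.numeratorHom_apply,
    OreLocalization.oreDiv_eq_iff] at h2
  obtain ⟨u, v, h3, h4⟩ := h2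
  have hu : (u : QM m) = v := by simpa using h4
  have h5 : (u : QM m) * b = (u : QM m) * a := by
    have := h3
    rw [Submonoid.smul_def, smul_eq_mul, ← hu] at this
    exact this
  exact (q_left_cancel h5).symm

/-! ### The lattice order on the braid group, and torsion-freeness -/

def PP (m : ℕ) : Submonoid (Gp m) := MonoidHom.mrange (πQ m)

/-- The prefix (left-divisibility) order on the braid group. -/
def gle (m : ℕ) (a b : Gp m) : Prop := a⁻¹ * b ∈ PP m

lemma gle_refl (a : Gp m) : gle m a a := by
  rw [gle, inv_mul_cancel]; exact one_mem _

lemma gle_trans {m : ℕ} {a b c : Gp m} (h : gle m a b) (h' : gle m b c) : gle m a c := by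
  have h2 := mul_mem h h'
  have e : (a⁻¹ * b) * (b⁻¹ * c) = a⁻¹ * c := by group
  rwa [e] at h2

lemma q_eq_one_of_mul_eq_one {m : ℕ} {a b : QM m} (h : a * b = 1) : a = 1 := by
  induction a using Con.induction_on with | H x =>
  induction b using Con.induction_on with | H y =>
  have h1 : (bcon m) (x * y) 1 := ((bcon m).eq).1 h
  have h2 : Beq (wv x ++ wv y) [] := by rw [← wv_mul]; exact h1
  have h3 := h2.length
  rw [List.length_append, List.length_nil] at h3
  apply ((bcon m).eq).2
  show Beq (wv x) (wv (1 : FreeMonoid (Fin m)))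
  have hx0 : wv x = [] := List.length_eq_zero_iff.1 (by omega)
  rw [hx0]
  rfl

lemma gle_antisymm {m : ℕ} {a b : Gp m} (h : gle m a b) (h' : gle m b a) : a = b := by
  obtain ⟨p, hp⟩ := h
  obtain ⟨q, hq⟩ := h'
  have h1 : πQ m (p * q) = 1 := by rw [map_mul, hp, hq]; group
  have h2 : p * q = 1 := πQ_inj m (by rw [h1, map_one])
  have h3 : p = 1 := q_eq_one_of_mul_eq_one h2
  have h4 : a⁻¹ * b = 1 := by rw [← hp, h3, map_one]
  exact (inv_mul_eq_one.1 h4)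

lemma gle_mul_left {m : ℕ} (g : Gp m) {a b : Gp m} (h : gle m a b) : gle m (g * a) (g * b) := by
  have e : (g * a)⁻¹ * (g * b) = a⁻¹ * b := by group
  rw [gle, e]
  exact h

lemma gle_pi {m : ℕ} {p h : QM m} : gle m (πQ m p) (πQ m h) ↔ p ∣ h := by
  constructor
  · rintro ⟨d, hd⟩
    refine ⟨d, ?_⟩
    apply πQ_inj m
    rw [map_mul, hd]
    group
  · rintro ⟨c, rfl⟩
    refine ⟨c, ?_⟩
    rw [map_mul]
    group

theorem q_lcm {m : ℕ} (p q : QM m) :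
    ∃ L, p ∣ L ∧ q ∣ L ∧ ∀ h, p ∣ h → q ∣ h → L ∣ h := by
  induction p using Con.induction_on with | H x =>
  induction q using Con.induction_on with | H y =>
  set k := max (wv x).length (wv y).length with hk
  have hu : Ldvd (wv x) (pw (Δw m) k) := D3' m (wv x) (wv_bdd x) k (le_max_left _ _)
  have hv : Ldvd (wv y) (pw (Δw m) k) := D3' m (wv y) (wv_bdd y) k (le_max_right _ _)
  obtain ⟨Lw, h1, h2, h3, least⟩ := condLcm (wv x) (pw (Δw m) k) (wv y) hu hv
  have hLb : ∀ t ∈ Lw, t < m := by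
    obtain ⟨t0, ht0⟩ := h3
    exact fun t ht => pw_bdd m k t (ht0.symm.mem (by simp [ht]))
  refine ⟨↑(pull m Lw hLb), ?_, ?_, ?_⟩
  · obtain ⟨c, hc⟩ := h1
    have hcb : ∀ t ∈ c, t < m := fun t ht => hLb t (hc.symm.mem (by simp [ht]))
    refine ⟨↑(pull m c hcb), ?_⟩
    rw [← Con.coe_mul]
    apply ((bcon m).eq).2
    show Beq (wv (pull m Lw hLb)) (wv (x * pull m c hcb))
    rw [wv_pull, wv_mul, wv_pull]
    exact hc.symm
  · obtain ⟨c, hc⟩ := h2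
    have hcb : ∀ t ∈ c, t < m := fun t ht => hLb t (hc.symm.mem (by simp [ht]))
    refine ⟨↑(pull m c hcb), ?_⟩
    rw [← Con.coe_mul]
    apply ((bcon m).eq).2
    show Beq (wv (pull m Lw hLb)) (wv (y * pull m c hcb))
    rw [wv_pull, wv_mul, wv_pull]
    exact hc.symm
  · intro h hp hq
    induction h using Con.induction_on with | H z =>
    obtain ⟨c, hc⟩ := hp
    obtain ⟨cw, rfl⟩ := Con.mk'_surjective c
    obtain ⟨d, hd⟩ := hq
    obtain ⟨dw, rfl⟩ := Con.mk'_surjective d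
    have hxz : Ldvd (wv x) (wv z) := by
      refine ⟨wv cw, ?_⟩
      rw [← wv_mul]
      exact ((bcon m).eq).1 hc.symm
    have hyz : Ldvd (wv y) (wv z) := by
      refine ⟨wv dw, ?_⟩
      rw [← wv_mul]
      exact ((bcon m).eq).1 hd.symm
    obtain ⟨t, ht⟩ := least (wv z) hxz hyz
    have htb : ∀ s ∈ t, s < m := fun s hs => wv_bdd z s (ht.symm.mem (by simp [hs]))
    refine ⟨↑(pull m t htb), ?_⟩
    rw [← Con.coe_mul]
    apply ((bcon m).eq).2
    show Beq (wv z) (wv (pull m Lw hLb * pull m t htb))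
    rw [wv_mul, wv_pull, wv_pull]
    exact ht.symm

theorem q_lcm_list {m : ℕ} : ∀ l : List (QM m),
    ∃ L, (∀ p ∈ l, p ∣ L) ∧ ∀ h, (∀ p ∈ l, p ∣ h) → L ∣ h := by
  intro l
  induction l with
  | nil => exact ⟨1, by simp, fun h _ => one_dvd h⟩
  | cons p l ih =>
    obtain ⟨L', hL', least'⟩ := ih
    obtain ⟨L, h1, h2, least⟩ := q_lcm p L'
    refine ⟨L, ?_, ?_⟩
    · intro q hq
      rcases List.mem_cons.1 hq with rfl | hq
      · exact h1
      · exact dvd_trans (hL' q hq) h2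
    · intro h hh
      exact least h (hh p (by simp)) (least' h (fun q hq => hh q (by simp [hq])))

/-- `y` is a least upper bound of the list `l` for the prefix order. -/
def IsLubL (m : ℕ) (l : List (Gp m)) (y : Gp m) : Prop :=
  (∀ a ∈ l, gle m a y) ∧ ∀ z, (∀ a ∈ l, gle m a z) → gle m y z

lemma lub_unique {m : ℕ} {l : List (Gp m)} {y y' : Gp m}
    (h : IsLubL m l y) (h' : IsLubL m l y') : y = y' :=
  gle_antisymm (h.2 y' h'.1) (h'.2 y h.1)

lemma lub_translate {m : ℕ} (g : Gp m) {l : List (Gp m)} {y : Gp m} (h : IsLubL m l y) :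
    IsLubL m (l.map (fun a => g * a)) (g * y) := by
  constructor
  · intro a ha
    obtain ⟨b, hb, rfl⟩ := List.mem_map.1 ha
    exact gle_mul_left g (h.1 b hb)
  · intro z hz
    have h2 : ∀ b ∈ l, gle m b (g⁻¹ * z) := by
      intro b hb
      have := hz (g * b) (List.mem_map_of_mem hb)
      have e : (g * b)⁻¹ * z = b⁻¹ * (g⁻¹ * z) := by group
      rw [gle, e] at this
      exact this
    have h3 := h.2 _ h2
    have e : y⁻¹ * (g⁻¹ * z) = (g * y)⁻¹ * z := by group
    rw [gle, e] at h3
    exact h3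

lemma lub_congr {m : ℕ} {l₁ l₂ : List (Gp m)} {y : Gp m}
    (hmem : ∀ a, a ∈ l₁ ↔ a ∈ l₂) (h : IsLubL m l₁ y) : IsLubL m l₂ y :=
  ⟨fun a ha => h.1 a ((hmem a).2 ha), fun z hz => h.2 z (fun a ha => hz a ((hmem a).1 ha))⟩

lemma lub_pi_list {m : ℕ} (l : List (QM m)) (hne : l ≠ []) :
    ∃ y, IsLubL m (l.map (πQ m)) y := by
  obtain ⟨L, hL, least⟩ := q_lcm_list l
  refine ⟨πQ m L, ?_, ?_⟩
  · intro a ha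
    obtain ⟨p, hp, rfl⟩ := List.mem_map.1 ha
    exact gle_pi.2 (hL p hp)
  · intro z hz
    obtain ⟨p₀, hp₀⟩ := List.exists_mem_of_ne_nil l hne
    have h₀ : gle m (πQ m p₀) z := hz _ (List.mem_map_of_mem hp₀)
    obtain ⟨d, hd⟩ := h₀
    have hz_eq : z = πQ m (p₀ * d) := by rw [map_mul, hd]; group
    rw [hz_eq]
    apply gle_pi.2
    apply least
    intro p hp
    have := hz _ (List.mem_map_of_mem (f := πQ m) hp)
    rw [hz_eq] at this
    exact gle_pi.1 this

/-! ### Shifting into the positive cone -/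

def ΔQ (m : ℕ) : QM m := ↑(pull m (Δw m) (fun x hx => Δw_mem hx))

def DD (m : ℕ) : Gp m := πQ m (ΔQ m)

lemma wv_pow (m : ℕ) :
    ∀ j, wv ((pull m (Δw m) (fun x hx => Δw_mem hx)) ^ j) = pw (Δw m) j := by
  intro j
  induction j with
  | zero => rfl
  | succ j ih =>
    rw [pow_succ, wv_mul, ih, wv_pull]
    exact pw_comm _ _

lemma deltaQ_pow (m j : ℕ) :
    (ΔQ m) ^ j = ↑((pull m (Δw m) (fun x hx => Δw_mem hx)) ^ j) := by
  induction j with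
  | zero => rfl
  | succ j ih => rw [pow_succ, pow_succ, ih, Con.coe_mul]; rfl

lemma DD_pow_eq (m : ℕ) (j : ℕ) : (DD m * DD m) ^ j = πQ m ((ΔQ m) ^ (2 * j)) := by
  rw [map_pow, ← sq, ← pow_mul]
  rfl

lemma D_comm_gen (m : ℕ) (i : Fin m) :
    (DD m * DD m) * PresentedGroup.of i = PresentedGroup.of i * (DD m * DD m) := by
  rw [← πQ_gen i, DD, ← map_mul, ← map_mul, ← map_mul]
  congr 1
  rw [ΔQ, genQ]
  rw [show (mkQ (FreeMonoid.of i) : QM m) =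
    ((FreeMonoid.of i : FreeMonoid (Fin m)) : QM m) from rfl]
  rw [← Con.coe_mul, ← Con.coe_mul, ← Con.coe_mul]
  apply ((bcon m).eq).2
  show Beq (wv (pull m (Δw m) _ * pull m (Δw m) _ * FreeMonoid.of i))
      (wv (FreeMonoid.of i * (pull m (Δw m) _ * pull m (Δw m) _)))
  rw [wv_mul, wv_mul, wv_mul, wv_mul, wv_pull]
  exact (comm_sq m (i : ℕ) i.2).symm

lemma D_central (m : ℕ) (g : Gp m) :
    (DD m * DD m) * g = g * (DD m * DD m) := by
  have hg : g ∈ Subgroup.centralizer {DD m * DD m} := by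
    apply PresentedGroup.generated_by
    intro j
    rw [Subgroup.mem_centralizer_iff]
    intro y hy
    rcases hy with rfl
    exact D_comm_gen m j
  exact Subgroup.mem_centralizer_iff.1 hg (DD m * DD m) rfl

lemma Dpow_central (m : ℕ) (k : ℕ) (g : Gp m) :
    (DD m * DD m) ^ k * g = g * (DD m * DD m) ^ k := by
  have hc : Commute (DD m * DD m) g := D_central m g
  exact (hc.pow_left k).eq

lemma q_delta_rdvd {m : ℕ} (p : QM m) (M0 : ℕ) :
    ∃ (M : ℕ) (c : QM m), M0 ≤ M ∧ c * p = (ΔQ m) ^ (2 * M) := by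
  induction p using Con.induction_on with | H x =>
  set M := max M0 (wv x).length with hM
  obtain ⟨cw, hcw⟩ := D3r m (wv x) (wv_bdd x) (2 * M) (by omega)
  have hcb : ∀ t ∈ cw, t < m :=
    fun t ht => pw_bdd m (2 * M) t (hcw.symm.mem (by simp [ht]))
  refine ⟨M, ↑(pull m cw hcb), le_max_left _ _, ?_⟩
  rw [deltaQ_pow, ← Con.coe_mul]
  apply ((bcon m).eq).2
  show Beq (wv (pull m cw hcb * x)) (wv (_ ^ (2 * M)))
  rw [wv_mul, wv_pull, wv_pow]
  exact hcw

lemma exists_shift {m : ℕ} (g : Gp m) :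
    ∃ (k : ℕ) (p : QM m), (DD m * DD m) ^ k * g = πQ m p := by
  let SS : Subgroup (Gp m) :=
    { carrier := {g | ∃ (k : ℕ) (p : QM m), (DD m * DD m) ^ k * g = πQ m p}
      one_mem' := ⟨0, 1, by simp⟩
      mul_mem' := by
        rintro a b ⟨k1, p1, h1⟩ ⟨k2, p2, h2⟩
        refine ⟨k1 + k2, p1 * p2, ?_⟩
        calc (DD m * DD m) ^ (k1 + k2) * (a * b)
            = (DD m * DD m) ^ k2 * ((DD m * DD m) ^ k1 * a) * b := by
              rw [show k1 + k2 = k2 + k1 from by omega, pow_add]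
              simp only [mul_assoc]
          _ = (DD m * DD m) ^ k2 * πQ m p1 * b := by rw [h1]
          _ = πQ m p1 * (DD m * DD m) ^ k2 * b := by rw [Dpow_central]
          _ = πQ m p1 * ((DD m * DD m) ^ k2 * b) := by rw [mul_assoc]
          _ = πQ m p1 * πQ m p2 := by rw [h2]
          _ = πQ m (p1 * p2) := (map_mul _ _ _).symm
      inv_mem' := by
        rintro a ⟨k, p, h⟩
        obtain ⟨M, c, hMk, hc⟩ := q_delta_rdvd p k
        refine ⟨M - k, c, ?_⟩
        have ha : a⁻¹ = (πQ m p)⁻¹ * (DD m * DD m) ^ k := by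
          rw [← h, mul_inv_rev]
          simp [mul_assoc]
        rw [ha]
        have e : (DD m * DD m) ^ (M - k) * ((πQ m p)⁻¹ * (DD m * DD m) ^ k) =
            ((DD m * DD m) ^ (M - k) * (DD m * DD m) ^ k) * (πQ m p)⁻¹ := by
          rw [← Dpow_central m k ((πQ m p)⁻¹)]
          simp only [mul_assoc]
        rw [e, ← pow_add, show M - k + k = M from by omega, DD_pow_eq]
        have h2 : πQ m c * πQ m p = πQ m ((ΔQ m) ^ (2 * M)) := by
          rw [← map_mul, hc]
        rw [← h2]
        simp [mul_assoc] }
  exact PresentedGroup.generated_by _ SS (fun j => ⟨0, genQ j, by simp [πQ_gen]⟩) g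

lemma shift_list {m : ℕ} : ∀ l : List (Gp m),
    ∃ k, ∀ a ∈ l, ∃ p, (DD m * DD m) ^ k * a = πQ m p := by
  intro l
  induction l with
  | nil => exact ⟨0, by simp⟩
  | cons a l ih =>
    obtain ⟨k1, p1, h1⟩ := exists_shift a
    obtain ⟨k2, hk2⟩ := ih
    refine ⟨max k1 k2, ?_⟩
    intro b hb
    rcases List.mem_cons.1 hb with rfl | hb
    · refine ⟨(ΔQ m) ^ (2 * (max k1 k2 - k1)) * p1, ?_⟩
      have e : (DD m * DD m) ^ (max k1 k2) =
          (DD m * DD m) ^ (max k1 k2 - k1) * (DD m * DD m) ^ k1 := by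
        rw [← pow_add]
        congr 1
        omega
      rw [e, mul_assoc, h1, map_mul, DD_pow_eq]
    · obtain ⟨p, hp⟩ := hk2 b hb
      refine ⟨(ΔQ m) ^ (2 * (max k1 k2 - k2)) * p, ?_⟩
      have e : (DD m * DD m) ^ (max k1 k2) =
          (DD m * DD m) ^ (max k1 k2 - k2) * (DD m * DD m) ^ k2 := by
        rw [← pow_add]
        congr 1
        omega
      rw [e, mul_assoc, hp, map_mul, DD_pow_eq]

lemma lub_exists {m : ℕ} (l : List (Gp m)) (hne : l ≠ []) : ∃ y, IsLubL m l y := by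
  obtain ⟨k, hk⟩ := shift_list l
  set g := (DD m * DD m) ^ k with hg
  set lq : List (QM m) := l.attach.map (fun a => (hk a.1 a.2).choose) with hlq
  have hmap : lq.map (πQ m) = l.map (fun a => g * a) := by
    rw [hlq, List.map_map]
    have e : ((πQ m) ∘ fun (a : {x // x ∈ l}) => (hk a.1 a.2).choose) =
        fun (a : {x // x ∈ l}) => g * a.1 := by
      funext a
      exact ((hk a.1 a.2).choose_spec).symm
    rw [e]
    exact List.attach_map_val (l := l) (f := fun a => g * a)
  have hne' : lq ≠ [] := by
    intro hcon
    apply hne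
    have := congrArg List.length hcon
    simp [hlq] at this
    exact List.length_eq_zero_iff.mp (by simp [this])
  obtain ⟨y', hy'⟩ := lub_pi_list lq hne'
  rw [hmap] at hy'
  refine ⟨g⁻¹ * y', ?_⟩
  have h2 := lub_translate g⁻¹ hy'
  have e : (l.map (fun a => g * a)).map (fun a => g⁻¹ * a) = l := by
    rw [List.map_map]
    have : ((fun a => g⁻¹ * a) ∘ (fun a => g * a)) = (id : Gp m → Gp m) :=
      funext fun a => by simp
    rw [this, List.map_id]
  rwa [e] at h2

theorem gp_torsion_free (m : ℕ) (x : Gp m) (n : ℕ) (hn : 0 < n) (hx : x ^ n = 1) :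
    x = 1 := by
  set l : List (Gp m) := (List.range n).map (fun i => x ^ i) with hl
  have hne : l ≠ [] := by
    intro h
    have := congrArg List.length h
    simp [hl] at this
    omega
  obtain ⟨y, hy⟩ := lub_exists l hne
  have hy2 := lub_translate x hy
  have hmem : ∀ a, a ∈ l.map (fun b => x * b) ↔ a ∈ l := by
    intro a
    simp only [hl, List.map_map, List.mem_map, List.mem_range, Function.comp]
    constructor
    · rintro ⟨i, hi, rfl⟩
      rcases Nat.lt_or_ge (i + 1) n with h | h
      · exact ⟨i + 1, h, by rw [pow_succ']⟩
      · have e : i + 1 = n := by omega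
        exact ⟨0, hn, by rw [pow_zero, ← hx, ← e, pow_succ']⟩
    · rintro ⟨i, hi, rfl⟩
      rcases Nat.eq_zero_or_pos i with rfl | hip
      · refine ⟨n - 1, by omega, ?_⟩
        have e : x ^ n = x * x ^ (n - 1) := by
          conv_lhs => rw [show n = (n - 1) + 1 from by omega]
          rw [pow_succ']
        rw [pow_zero, ← hx, e]
      · exact ⟨i - 1, by omega, by rw [← pow_succ']; congr 1; omega⟩
  have hy3 := lub_congr hmem hy2
  have hxy : x * y = 1 * y := by rw [one_mul]; exact lub_unique hy3 hy
  exact mul_right_cancel hxy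

end BraidTF

/-- The braid group `B_n` on `n` strands, presented with generators `σ_1, …, σ_{n-1}`. -/
def BraidGroup (n : ℕ) : Type := PresentedGroup (braidRels (n - 1))

instance (n : ℕ) : Group (BraidGroup n) := by
  unfold BraidGroup; infer_instance

/-- Old Mathlib definition (removed upstream): a monoid is torsion-free if no non-identity
element has finite order. -/
def Monoid.IsTorsionFree (G : Type*) [Monoid G] : Prop :=
  ∀ g : G, g ≠ 1 → ¬IsOfFinOrder g

/-- The braid group `B_n` is torsion-free: its only element of finite order is the identity. -/
theorem braidGroup_isTorsionFree (n : ℕ) : Monoid.IsTorsionFree (BraidGroup n) := by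
  intro g hg hfin
  obtain ⟨k, hk0, hk1⟩ := isOfFinOrder_iff_pow_eq_one.1 hfin
  exact hg (BraidTF.gp_torsion_free (n - 1) g k hk0 hk1)
end

section
/- The pure braid group P_n (kernel of the canonical surjection B_n → S_n) is torsion-free, and consequently any finite subgroup of B_n injects into S_n under the canonical map. -/
/-- The generator `σ_i` of the braid group. -/
def BraidGroup.gen (n : ℕ) (i : Fin (n - 1)) : BraidGroup n :=
  PresentedGroup.of (rels := braidRels (n - 1)) i

namespace Braid

/-- far-apart indices -/
def Far (i j : ℕ) : Prop := i + 2 ≤ j ∨ j + 2 ≤ i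

/-- adjacent indices -/
def Adj (i j : ℕ) : Prop := i + 1 = j ∨ j + 1 = i

lemma Far.symm {i j : ℕ} (h : Far i j) : Far j i := h.elim .inr .inl
instance instDecAdj (i j : ℕ) : Decidable (Adj i j) := by unfold Adj; infer_instance

lemma Adj.symm {i j : ℕ} (h : Adj i j) : Adj j i := h.elim .inr .inl

lemma tri (i j : ℕ) : i = j ∨ Adj i j ∨ Far i j := by
  unfold Adj Far; omega

lemma Far.ne {i j : ℕ} (h : Far i j) : i ≠ j := by unfold Far at h; omega
lemma Adj.ne {i j : ℕ} (h : Adj i j) : i ≠ j := by unfold Adj at h; omega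
lemma Far.not_adj {i j : ℕ} (h : Far i j) : ¬ Adj i j := by unfold Far Adj at *; omega

/-- One rewriting step on positive braid words. -/
inductive Step : List ℕ → List ℕ → Prop
  | comm (a b : List ℕ) {i j : ℕ} (h : Far i j) :
      Step (a ++ i :: j :: b) (a ++ j :: i :: b)
  | braid (a b : List ℕ) {i j : ℕ} (h : Adj i j) :
      Step (a ++ i :: j :: i :: b) (a ++ j :: i :: j :: b)

/-- Braid equivalence of positive words. -/
def Eqv (u v : List ℕ) : Prop := Relation.ReflTransGen Step u v

lemma Step.symm {u v : List ℕ} (h : Step u v) : Step v u := by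
  cases h with
  | comm a b h => exact .comm a b h.symm
  | braid a b h => exact .braid a b h.symm

@[refl] lemma Eqv.refl (u : List ℕ) : Eqv u u := Relation.ReflTransGen.refl

lemma Eqv.rfl {u : List ℕ} : Eqv u u := Relation.ReflTransGen.refl

lemma Eqv.trans {u v w : List ℕ} (h : Eqv u v) (h' : Eqv v w) : Eqv u w :=
  Relation.ReflTransGen.trans h h'

lemma Eqv.symm {u v : List ℕ} (h : Eqv u v) : Eqv v u := by
  induction h with
  | refl => exact .rfl
  | tail _ h ih => exact Relation.ReflTransGen.trans (Relation.ReflTransGen.single h.symm) ih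

lemma Step.eqv {u v : List ℕ} (h : Step u v) : Eqv u v := Relation.ReflTransGen.single h

lemma Step.append_left {u v : List ℕ} (c : List ℕ) (h : Step u v) : Step (c ++ u) (c ++ v) := by
  cases h with
  | comm a b hf => rw [← List.append_assoc, ← List.append_assoc]; exact .comm (c ++ a) b hf
  | braid a b hf => rw [← List.append_assoc, ← List.append_assoc]; exact .braid (c ++ a) b hf

lemma Step.append_right {u v : List ℕ} (c : List ℕ) (h : Step u v) : Step (u ++ c) (v ++ c) := by
  cases h with
  | comm a b hf =>
      simpa [List.append_assoc] using Step.comm a (b ++ c) hf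
  | braid a b hf =>
      simpa [List.append_assoc] using Step.braid a (b ++ c) hf

lemma Eqv.append_left {u v : List ℕ} (c : List ℕ) (h : Eqv u v) : Eqv (c ++ u) (c ++ v) := by
  induction h with
  | refl => exact .rfl
  | tail _ h ih => exact ih.trans (h.append_left c).eqv

lemma Eqv.append_right {u v : List ℕ} (c : List ℕ) (h : Eqv u v) : Eqv (u ++ c) (v ++ c) := by
  induction h with
  | refl => exact .rfl
  | tail _ h ih => exact ih.trans (h.append_right c).eqv

lemma Eqv.append {u v u' v' : List ℕ} (h : Eqv u u') (h' : Eqv v v') :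
    Eqv (u ++ v) (u' ++ v') :=
  (h.append_right v).trans (h'.append_left u')

lemma Eqv.cons {u v : List ℕ} (i : ℕ) (h : Eqv u v) : Eqv (i :: u) (i :: v) :=
  h.append_left [i]

lemma swap_cons {i j : ℕ} (h : Far i j) (t : List ℕ) : Eqv (i :: j :: t) (j :: i :: t) :=
  (Step.comm [] t h).eqv

lemma braid_cons {i j : ℕ} (h : Adj i j) (t : List ℕ) :
    Eqv (i :: j :: i :: t) (j :: i :: j :: t) :=
  (Step.braid [] t h).eqv

lemma Step.length_eq {u v : List ℕ} (h : Step u v) : u.length = v.length := by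
  cases h <;> simp

lemma Eqv.length_eq {u v : List ℕ} (h : Eqv u v) : u.length = v.length := by
  induction h with
  | refl => rfl
  | tail _ h ih => exact ih.trans h.length_eq

lemma Step.mem_imp {u v : List ℕ} (h : Step u v) (p : ℕ → Prop)
    (hp : ∀ x ∈ u, p x) : ∀ x ∈ v, p x := by
  cases h with
  | comm a b hf => intro x hx; apply hp; simp at hx ⊢; tauto
  | braid a b hf => intro x hx; apply hp; simp at hx ⊢; tauto

lemma Eqv.mem_imp {u v : List ℕ} (h : Eqv u v) (p : ℕ → Prop)
    (hp : ∀ x ∈ u, p x) : ∀ x ∈ v, p x := by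
  induction h with
  | refl => exact hp
  | tail _ h ih => exact h.mem_imp p ih

/-- The complement: `i * compl i j = lcm (i, j)`. -/
def compl (i j : ℕ) : List ℕ :=
  if i = j then [] else if Adj i j then [j, i] else [j]

@[simp] lemma compl_self (i : ℕ) : compl i i = [] := by simp [compl]

lemma compl_adj {i j : ℕ} (h : Adj i j) : compl i j = [j, i] := by
  simp [compl, h.ne, h]

lemma compl_far {i j : ℕ} (h : Far i j) : compl i j = [j] := by
  simp [compl, h.ne, h.not_adj]

/-- The two lcm words are equivalent. -/
lemma lcm_eqv (i j : ℕ) : Eqv (i :: compl i j) (j :: compl j i) := by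
  rcases tri i j with h | h | h
  · subst h; exact .rfl
  · rw [compl_adj h, compl_adj h.symm]; exact braid_cons h []
  · rw [compl_far h, compl_far h.symm]; exact swap_cons h []

end Braid

namespace Braid

lemma step_cons_inv' {u c : List ℕ} (h : Step u c) :
    ∀ {x : ℕ} {t : List ℕ}, u = x :: t →
    (∃ t', Step t t' ∧ c = x :: t') ∨
    (∃ y r, Far x y ∧ t = y :: r ∧ c = y :: x :: r) ∨
    (∃ y r, Adj x y ∧ t = y :: x :: r ∧ c = y :: x :: y :: r) := by
  cases h with
  | comm a b hf =>
    intro x t hxt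
    cases a with
    | nil =>
      simp only [List.nil_append, List.cons.injEq] at hxt
      obtain ⟨rfl, rfl⟩ := hxt
      right; left
      exact ⟨_, b, hf, rfl, rfl⟩
    | cons q a' =>
      simp only [List.cons_append, List.cons.injEq] at hxt
      obtain ⟨rfl, rfl⟩ := hxt
      left
      exact ⟨a' ++ _ :: _ :: b, Step.comm a' b hf, rfl⟩
  | braid a b hf =>
    intro x t hxt
    cases a with
    | nil =>
      simp only [List.nil_append, List.cons.injEq] at hxt
      obtain ⟨rfl, rfl⟩ := hxt
      right; right
      exact ⟨_, b, hf, rfl, rfl⟩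
    | cons q a' =>
      simp only [List.cons_append, List.cons.injEq] at hxt
      obtain ⟨rfl, rfl⟩ := hxt
      left
      exact ⟨a' ++ _ :: _ :: _ :: b, Step.braid a' b hf, rfl⟩

lemma step_cons_inv {x : ℕ} {t c : List ℕ} (h : Step (x :: t) c) :
    (∃ t', Step t t' ∧ c = x :: t') ∨
    (∃ y r, Far x y ∧ t = y :: r ∧ c = y :: x :: r) ∨
    (∃ y r, Adj x y ∧ t = y :: x :: r ∧ c = y :: x :: y :: r) :=
  step_cons_inv' h rfl

end Braid
namespace Braid

/-- Garside's key lemma: if `i·u ≡ j·v` then `u` and `v` are obtained by completing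
the lcm of the generators `i, j`. -/
theorem keyAux (ℓ : ℕ) : ∀ {u v : List ℕ} {i j : ℕ}, u.length ≤ ℓ → Eqv (i :: u) (j :: v) →
    ∃ w, Eqv u (compl i j ++ w) ∧ Eqv v (compl j i ++ w) := by
  induction ℓ using Nat.strong_induction_on with
  | _ ℓ IH =>
  have KIH : ∀ {u' v' : List ℕ} {i' j' : ℕ}, u'.length < ℓ → Eqv (i' :: u') (j' :: v') →
      ∃ w, Eqv u' (compl i' j' ++ w) ∧ Eqv v' (compl j' i' ++ w) := by
    intro u' v' i' j' hu h
    exact IH _ hu (le_refl _) h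
  intro u v i j hlen h
  have main : ∀ a (hc : Relation.ReflTransGen Step a (j :: v)), ∀ (i : ℕ) (u : List ℕ),
      a = i :: u → u.length ≤ ℓ →
      ∃ w, Eqv u (compl i j ++ w) ∧ Eqv v (compl j i ++ w) := by
    intro a hc
    induction hc using Relation.ReflTransGen.head_induction_on with
    | refl =>
      intro i u ha _
      injection ha with h1 h2
      subst h1; subst h2
      exact ⟨v, by simpa using Eqv.rfl, by simpa using Eqv.rfl⟩
    | head hstep hchain ihh =>
      intro i u ha hlen
      subst ha
      rcases step_cons_inv hstep with ⟨t', hst, rfl⟩ | ⟨p, r, hfar, rfl, rfl⟩ |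
        ⟨p, r, hadj, rfl, rfl⟩
      · -- step inside the tail
        obtain ⟨w, h1, h2⟩ := ihh i t' rfl (by rw [← hst.length_eq]; exact hlen)
        exact ⟨w, hst.eqv.trans h1, h2⟩
      · -- head move by a commutation: u = p :: r, Far i p
        have hr : r.length + 1 ≤ ℓ := by simpa using hlen
        obtain ⟨w₁, h1, h2⟩ := ihh p (i :: r) rfl (by simpa using hlen)
        rcases tri p j with rfl | hpj | hpj
        · -- p = j
          rw [compl_self, List.nil_append] at h1 h2
          refine ⟨r, ?_, ?_⟩
          · rw [compl_far hfar]
            exact Eqv.rfl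
          · rw [compl_far hfar.symm]
            exact h2.trans h1.symm
        · -- Adj p j
          rw [compl_adj hpj] at h1
          have e1 : r.length + 1 = w₁.length + 2 := by have := h1.length_eq; simp at this; omega
          obtain ⟨w₂, h3, h4⟩ := KIH (by omega) h1
          rcases tri i j with rfl | hij | hij
          · exact absurd hpj hfar.symm.not_adj
          · -- Adj i j
            rw [compl_adj hij] at h3
            rw [compl_adj hij.symm] at h4
            rw [compl_adj hij, compl_adj hij.symm]
            have e2 : w₁.length + 1 = w₂.length + 2 := by have := h4.length_eq; simp at this; omega
            obtain ⟨w₃, h5, h6⟩ := KIH (show w₁.length < ℓ by omega) h4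
            rw [compl_far hfar.symm] at h5
            rw [compl_far hfar] at h6
            obtain ⟨w₄, h7, h8⟩ := KIH (show w₂.length < ℓ by omega)
              (show Eqv (j :: w₂) (p :: w₃) from h6)
            rw [compl_adj hpj.symm] at h7
            rw [compl_adj hpj] at h8
            refine ⟨p :: j :: i :: w₄, ?_, ?_⟩
            · exact (h3.cons p).trans <| (((h7.cons i).cons j).cons p).trans <|
                ((Eqv.cons p (Eqv.cons j (swap_cons hfar (j :: w₄)))).trans <|
                (braid_cons hpj (i :: j :: w₄)).trans <|
                (Eqv.cons j (Eqv.cons p (braid_cons hij.symm w₄))).trans <|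
                Eqv.cons j (swap_cons hfar.symm (j :: i :: w₄)))
            · rw [compl_adj hpj.symm] at h2
              exact h2.trans <| ((h5.cons j).cons p).trans <|
                (((h8.cons i).cons j).cons p).trans <|
                (Eqv.cons p (braid_cons hij.symm (p :: w₄))).trans <|
                (swap_cons hfar.symm (j :: i :: p :: w₄)).trans <|
                (Eqv.cons i (Eqv.cons p (Eqv.cons j (swap_cons hfar w₄)))).trans <|
                Eqv.cons i (braid_cons hpj (i :: w₄))
          · -- Far i j
            rw [compl_far hij] at h3
            rw [compl_far hij.symm] at h4
            rw [compl_far hij, compl_far hij.symm]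
            have e2 : w₁.length + 1 = w₂.length + 1 := by have := h4.length_eq; simp at this; omega
            obtain ⟨w₃, h5, h6⟩ := KIH (show w₁.length < ℓ by omega) h4
            rw [compl_far hfar.symm] at h5
            rw [compl_far hfar] at h6
            refine ⟨p :: j :: w₃, ?_, ?_⟩
            · exact (h3.cons p).trans <| ((h6.cons j).cons p).trans <|
                braid_cons hpj w₃
            · rw [compl_adj hpj.symm] at h2
              exact h2.trans <| ((h5.cons j).cons p).trans <|
                (Eqv.cons p (swap_cons hij.symm w₃)).trans <|
                swap_cons hfar.symm (j :: w₃)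
        · -- Far p j
          rw [compl_far hpj] at h1
          obtain ⟨w₂, h3, h4⟩ := KIH (show r.length < ℓ by omega) h1
          rcases tri i j with rfl | hij | hij
          · -- i = j
            rw [compl_self, List.nil_append] at h3 h4
            rw [compl_far hfar] at h2
            refine ⟨p :: r, by simp only [compl_self, List.nil_append]; exact Eqv.rfl, ?_⟩
            rw [compl_self, List.nil_append]
            exact h2.trans ((h4.trans h3.symm).cons p)
          · -- Adj i j
            rw [compl_adj hij] at h3
            rw [compl_adj hij.symm] at h4
            rw [compl_adj hij, compl_adj hij.symm]
            rw [compl_far hpj.symm] at h2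
            refine ⟨p :: w₂, ?_, ?_⟩
            · exact (h3.cons p).trans <| (swap_cons hpj (i :: w₂)).trans <|
                Eqv.cons j (swap_cons hfar.symm w₂)
            · exact h2.trans <| (h4.cons p).trans <|
                (swap_cons hfar.symm (j :: w₂)).trans <|
                Eqv.cons i (swap_cons hpj w₂)
          · -- Far i j
            rw [compl_far hij] at h3
            rw [compl_far hij.symm] at h4
            rw [compl_far hij, compl_far hij.symm]
            rw [compl_far hpj.symm] at h2
            refine ⟨p :: w₂, ?_, ?_⟩
            · exact (h3.cons p).trans (swap_cons hpj w₂)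
            · exact h2.trans <| (h4.cons p).trans (swap_cons hfar.symm w₂)
      · -- head move by a braid relation: u = p :: i :: r, Adj i p
        have hr : r.length + 2 ≤ ℓ := by simp at hlen; omega
        obtain ⟨w₁, h1, h2⟩ := ihh p (i :: p :: r) rfl (by simpa using hlen)
        rcases tri p j with rfl | hpj | hpj
        · -- p = j
          rw [compl_self, List.nil_append] at h1 h2
          refine ⟨r, ?_, ?_⟩
          · rw [compl_adj hadj]
            exact Eqv.rfl
          · rw [compl_adj hadj.symm]
            exact h2.trans h1.symm
        · -- Adj p j
          rw [compl_adj hpj] at h1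
          have e1 : r.length + 2 = w₁.length + 2 := by have := h1.length_eq; simp at this; omega
          obtain ⟨w₂, h3, h4⟩ := KIH (show (p :: r).length < ℓ by simp; omega) h1
          rcases tri i j with rfl | hij | hij
          · -- i = j
            rw [compl_self, List.nil_append] at h3 h4
            obtain ⟨w₅, h5, h6⟩ := KIH (show w₁.length < ℓ by omega)
              (show Eqv (p :: w₁) (p :: r) from h4.trans h3.symm)
            rw [compl_self, List.nil_append] at h5 h6
            rw [compl_adj hadj] at h2
            refine ⟨p :: i :: r, by simp only [compl_self, List.nil_append]; exact Eqv.rfl, ?_⟩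
            rw [compl_self, List.nil_append]
            exact h2.trans (((h5.trans h6.symm).cons i).cons p)
          · -- Adj i j : impossible
            exfalso
            rcases hadj with h' | h' <;> rcases hpj with h'' | h'' <;>
              rcases hij with h''' | h''' <;> omega
          · -- Far i j
            rw [compl_far hij] at h3
            rw [compl_far hij.symm] at h4
            rw [compl_far hij, compl_far hij.symm]
            have e2 : w₁.length + 1 = w₂.length + 1 := by have := h4.length_eq; simp at this; omega
            obtain ⟨w₃, h5, h6⟩ := KIH (show w₁.length < ℓ by omega) h4
            rw [compl_adj hadj.symm] at h5
            rw [compl_adj hadj] at h6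
            obtain ⟨w₄, h7, h8⟩ := KIH (show r.length < ℓ by omega) h3
            rw [compl_adj hpj] at h7
            rw [compl_adj hpj.symm] at h8
            have e3 : w₂.length = w₃.length + 2 := by have := h6.length_eq; simp at this; omega
            obtain ⟨w₀, h9, h10⟩ := KIH (show (i :: w₃).length < ℓ by simp; omega)
              (show Eqv (p :: i :: w₃) (p :: j :: w₄) from h6.symm.trans h8)
            rw [compl_self, List.nil_append] at h9 h10
            obtain ⟨w₅, h11, h12⟩ := KIH (show w₃.length < ℓ by omega) (h9.trans h10.symm)
            rw [compl_far hij] at h11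
            rw [compl_far hij.symm] at h12
            refine ⟨p :: j :: i :: p :: w₅, ?_, ?_⟩
            · exact ((h7.cons i).cons p).trans <|
                ((((h12.cons p).cons j).cons i).cons p).trans <|
                (Eqv.cons p (swap_cons hij (p :: i :: w₅))).trans <|
                (Eqv.cons p (Eqv.cons j (braid_cons hadj w₅))).trans <|
                braid_cons hpj (i :: p :: w₅)
            · rw [compl_adj hpj.symm] at h2
              exact h2.trans <| (((h5.cons j).cons p)).trans <|
                ((((h11.cons p).cons i).cons j).cons p).trans <|
                (Eqv.cons p (swap_cons hij.symm (p :: j :: w₅))).trans <|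
                (Eqv.cons p (Eqv.cons i (braid_cons hpj.symm w₅))).trans <|
                (braid_cons hadj.symm (j :: p :: w₅)).trans <|
                Eqv.cons i (Eqv.cons p (swap_cons hij (p :: w₅)))
        · -- Far p j
          rw [compl_far hpj] at h1
          obtain ⟨w₂, h3, h4⟩ := KIH (show (p :: r).length < ℓ by simp; omega) h1
          rcases tri i j with rfl | hij | hij
          · exact absurd hadj.symm hpj.not_adj
          · -- Adj i j
            rw [compl_adj hij] at h3
            rw [compl_adj hij.symm] at h4
            rw [compl_adj hij, compl_adj hij.symm]
            have e2 : r.length + 1 = w₂.length + 2 := by have := h3.length_eq; simp at this; omega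
            obtain ⟨w₃, h5, h6⟩ := KIH (show r.length < ℓ by omega) h3
            rw [compl_far hpj] at h5
            rw [compl_far hpj.symm] at h6
            obtain ⟨w₄, h7, h8⟩ := KIH (show w₂.length < ℓ by omega) h6
            rw [compl_adj hadj] at h7
            rw [compl_adj hadj.symm] at h8
            refine ⟨p :: i :: j :: w₄, ?_, ?_⟩
            · exact (((h5.cons i).cons p)).trans <|
                ((((h8.cons j).cons i).cons p)).trans <|
                (Eqv.cons p (braid_cons hij (p :: w₄))).trans <|
                (swap_cons hpj (i :: j :: p :: w₄)).trans <|
                (Eqv.cons j (Eqv.cons p (Eqv.cons i (swap_cons hpj.symm w₄)))).trans <|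
                Eqv.cons j (braid_cons hadj.symm (j :: w₄))
            · rw [compl_far hpj.symm] at h2
              exact h2.trans <| (h4.cons p).trans <|
                ((((h7.cons j).cons i).cons p)).trans <|
                (Eqv.cons p (Eqv.cons i (swap_cons hpj.symm (i :: w₄)))).trans <|
                (braid_cons hadj.symm (j :: i :: w₄)).trans <|
                (Eqv.cons i (Eqv.cons p (braid_cons hij w₄))).trans <|
                Eqv.cons i (swap_cons hpj (i :: j :: w₄))
          · -- Far i j
            rw [compl_far hij] at h3
            rw [compl_far hij.symm] at h4
            rw [compl_far hij, compl_far hij.symm]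
            have e2 : r.length + 1 = w₂.length + 1 := by have := h3.length_eq; simp at this; omega
            obtain ⟨w₃, h5, h6⟩ := KIH (show r.length < ℓ by omega) h3
            rw [compl_far hpj] at h5
            rw [compl_far hpj.symm] at h6
            rw [compl_far hpj.symm] at h2
            refine ⟨p :: i :: w₃, ?_, ?_⟩
            · exact (((h5.cons i).cons p)).trans <|
                (Eqv.cons p (swap_cons hij (w₃))).trans <|
                swap_cons hpj (i :: w₃)
            · exact h2.trans <| (h4.cons p).trans <|
                ((h6.cons i).cons p).trans <|
                braid_cons hadj.symm w₃
  exact main _ h i u rfl hlen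

theorem key {u v : List ℕ} {i j : ℕ} (h : Eqv (i :: u) (j :: v)) :
    ∃ w, Eqv u (compl i j ++ w) ∧ Eqv v (compl j i ++ w) :=
  keyAux u.length (le_refl _) h

end Braid
namespace Braid

lemma cancel {i : ℕ} {u v : List ℕ} (h : Eqv (i :: u) (i :: v)) : Eqv u v := by
  obtain ⟨w, h1, h2⟩ := key h
  rw [compl_self, List.nil_append] at h1 h2
  exact h1.trans h2.symm

lemma cancel_prefix (p : List ℕ) {u v : List ℕ} (h : Eqv (p ++ u) (p ++ v)) : Eqv u v := by
  induction p with
  | nil => simpa using h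
  | cons i p ih => exact ih (cancel (by simpa using h))

lemma Step.rev {u v : List ℕ} (h : Step u v) : Step u.reverse v.reverse := by
  cases h with
  | @comm a b i j hf =>
      have e1 : (a ++ i :: j :: b).reverse = b.reverse ++ j :: i :: a.reverse := by simp
      have e2 : (a ++ j :: i :: b).reverse = b.reverse ++ i :: j :: a.reverse := by simp
      rw [e1, e2]
      exact Step.comm b.reverse a.reverse hf.symm
  | @braid a b i j hf =>
      have e1 : (a ++ i :: j :: i :: b).reverse = b.reverse ++ i :: j :: i :: a.reverse := by
        simp
      have e2 : (a ++ j :: i :: j :: b).reverse = b.reverse ++ j :: i :: j :: a.reverse := by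
        simp
      rw [e1, e2]
      exact Step.braid b.reverse a.reverse hf

lemma Eqv.rev {u v : List ℕ} (h : Eqv u v) : Eqv u.reverse v.reverse := by
  induction h with
  | refl => exact .rfl
  | tail _ h ih => exact ih.trans h.rev.eqv

lemma cancel_suffix (x : List ℕ) {u v : List ℕ} (h : Eqv (u ++ x) (v ++ x)) : Eqv u v := by
  have := (cancel_prefix x.reverse (by simpa using h.rev)).rev
  simpa using this

/-- left divisibility of braid words -/
def Dvd (u c : List ℕ) : Prop := ∃ x, Eqv c (u ++ x)

lemma Dvd.rfl {u : List ℕ} : Dvd u u := ⟨[], by simpa using Eqv.rfl⟩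

lemma dvd_nil (c : List ℕ) : Dvd [] c := ⟨c, by simpa using Eqv.rfl⟩

lemma Dvd.of_eqv_right {u c c' : List ℕ} (h : Eqv c c') (hd : Dvd u c) : Dvd u c' := by
  obtain ⟨x, hx⟩ := hd; exact ⟨x, h.symm.trans hx⟩

lemma Dvd.of_eqv_left {u u' c : List ℕ} (h : Eqv u u') (hd : Dvd u c) : Dvd u' c := by
  obtain ⟨x, hx⟩ := hd; exact ⟨x, hx.trans (h.append_right x)⟩

lemma Dvd.append_right {u c : List ℕ} (y : List ℕ) (hd : Dvd u c) : Dvd u (c ++ y) := by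
  obtain ⟨x, hx⟩ := hd
  exact ⟨x ++ y, by rw [← List.append_assoc]; exact hx.append_right y⟩

lemma Dvd.cons {u c : List ℕ} (i : ℕ) (hd : Dvd u c) : Dvd (i :: u) (i :: c) := by
  obtain ⟨x, hx⟩ := hd; exact ⟨x, hx.cons i⟩

lemma Dvd.of_cons {u c : List ℕ} {i : ℕ} (hd : Dvd (i :: u) (i :: c)) : Dvd u c := by
  obtain ⟨x, hx⟩ := hd; exact ⟨x, cancel hx⟩

lemma Dvd.trans {a b c : List ℕ} (h1 : Dvd a b) (h2 : Dvd b c) : Dvd a c := by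
  obtain ⟨x, hx⟩ := h1; obtain ⟨y, hy⟩ := h2
  exact ⟨x ++ y, by rw [← List.append_assoc]; exact hy.trans (hx.append_right y)⟩

lemma Dvd.append_left_cancel {p u c : List ℕ} (hd : Dvd (p ++ u) (p ++ c)) : Dvd u c := by
  obtain ⟨x, hx⟩ := hd; rw [List.append_assoc] at hx; exact ⟨x, cancel_prefix p hx⟩

lemma Dvd.append_left {p u c : List ℕ} (hd : Dvd u c) : Dvd (p ++ u) (p ++ c) := by
  obtain ⟨x, hx⟩ := hd; exact ⟨x, by rw [List.append_assoc]; exact hx.append_left p⟩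

lemma Dvd.length_le {u c : List ℕ} (h : Dvd u c) : u.length ≤ c.length := by
  obtain ⟨x, hx⟩ := h
  have := hx.length_eq; simp at this; omega

/-- Conditional lcm with universal property. -/
theorem word_lcm_aux : ∀ (n : ℕ) (c u1 u2 : List ℕ), c.length ≤ n → Dvd u1 c → Dvd u2 c →
    ∃ m, Dvd u1 m ∧ Dvd u2 m ∧ Dvd m c ∧ ∀ c', Dvd u1 c' → Dvd u2 c' → Dvd m c' := by
  intro n
  induction n using Nat.strong_induction_on with
  | _ n IH =>
  intro c u1 u2 hc h1 h2
  rcases u1 with _ | ⟨i, u1'⟩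
  · exact ⟨u2, dvd_nil u2, Dvd.rfl, h2, fun c' _ h => h⟩
  rcases u2 with _ | ⟨j, u2'⟩
  · exact ⟨i :: u1', Dvd.rfl, dvd_nil _, h1, fun c' h _ => h⟩
  obtain ⟨a1, ha1⟩ := h1
  obtain ⟨a2, ha2⟩ := h2
  rw [List.cons_append] at ha1 ha2
  have hkey : Eqv (i :: (u1' ++ a1)) (j :: (u2' ++ a2)) := ha1.symm.trans ha2
  have hlc : (u1' ++ a1).length + 1 = c.length := by
    have := ha1.length_eq; simp at this ⊢; omega
  by_cases hij : i = j
  · subst hij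
    have hc1 : Eqv (u1' ++ a1) (u2' ++ a2) := cancel hkey
    obtain ⟨m', hm1, hm2, hm3, hmu⟩ := IH (n-1) (by omega) (u1' ++ a1) u1' u2'
      (by omega) ⟨a1, Eqv.rfl⟩ ⟨a2, hc1⟩
    refine ⟨i :: m', hm1.cons i, hm2.cons i, (hm3.cons i).of_eqv_right ha1.symm, ?_⟩
    intro c'' hd1 hd2
    obtain ⟨α, hα⟩ := hd1
    obtain ⟨β, hβ⟩ := hd2
    rw [List.cons_append] at hα hβ
    have hαβ : Eqv (u1' ++ α) (u2' ++ β) := cancel (hα.symm.trans hβ)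
    have := hmu (u1' ++ α) ⟨α, Eqv.rfl⟩ ⟨β, hαβ⟩
    exact (this.cons i).of_eqv_right hα.symm
  · obtain ⟨w, k1, k2⟩ := key hkey
    have hlw : (compl j i ++ w).length + 1 = c.length := by
      have e1 := k2.length_eq; have e2 := ha2.length_eq; simp at e1 e2 ⊢; omega
    obtain ⟨m2, hm21, hm22, hm23, hm2u⟩ := IH (n-1) (by omega) (compl j i ++ w) u2'
      (compl j i) (by omega) ⟨a2, k2.symm⟩ ⟨w, Eqv.rfl⟩
    obtain ⟨m2', hm2'⟩ := hm22
    have hw_m2' : Dvd m2' w := by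
      obtain ⟨s, hs⟩ := hm23
      refine ⟨s, cancel_prefix (compl j i) (hs.trans ?_)⟩
      rw [← List.append_assoc]
      exact hm2'.append_right s
    have hd_c1_2 : Dvd (compl i j ++ m2') (u1' ++ a1) :=
      (hw_m2'.append_left (p := compl i j)).of_eqv_right k1.symm
    obtain ⟨m3, hm31, hm32, hm33, hm3u⟩ := IH (n-1) (by omega) (u1' ++ a1) u1'
      (compl i j ++ m2') (by omega) ⟨a1, Eqv.rfl⟩ hd_c1_2
    have hbridge : Eqv (j :: (compl j i ++ m2')) (i :: (compl i j ++ m2')) := by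
      have := (lcm_eqv j i).append_right m2'
      simpa using this
    refine ⟨i :: m3, hm31.cons i, ?_, ?_, ?_⟩
    · -- Dvd (j :: u2') (i :: m3)
      have d1 : Dvd (j :: u2') (j :: (compl j i ++ m2')) :=
        (hm21.of_eqv_right hm2').cons j
      have d2 : Dvd (j :: (compl j i ++ m2')) (i :: m3) :=
        (hm32.cons i).of_eqv_left hbridge.symm
      exact d1.trans d2
    · exact (hm33.cons i).of_eqv_right ha1.symm
    · intro c'' hd1 hd2
      obtain ⟨α, hα⟩ := hd1
      obtain ⟨β, hβ⟩ := hd2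
      rw [List.cons_append] at hα hβ
      obtain ⟨w'', k1'', k2''⟩ := key (hα.symm.trans hβ)
      have hm2w : Dvd m2 (compl j i ++ w'') :=
        hm2u (compl j i ++ w'') ⟨β, k2''.symm⟩ ⟨w'', Eqv.rfl⟩
      have hm2'w : Dvd m2' w'' := by
        obtain ⟨t', ht'⟩ := hm2w
        refine ⟨t', cancel_prefix (compl j i) (ht'.trans ?_)⟩
        rw [← List.append_assoc]
        exact hm2'.append_right t'
      have : Dvd (compl i j ++ m2') (u1' ++ α) :=
        (hm2'w.append_left (p := compl i j)).of_eqv_right k1''.symm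
      have := hm3u (u1' ++ α) ⟨α, Eqv.rfl⟩ this
      exact (this.cons i).of_eqv_right hα.symm

theorem word_lcm {c u1 u2 : List ℕ} (h1 : Dvd u1 c) (h2 : Dvd u2 c) :
    ∃ m, Dvd u1 m ∧ Dvd u2 m ∧ Dvd m c ∧ ∀ c', Dvd u1 c' → Dvd u2 c' → Dvd m c' :=
  word_lcm_aux c.length c u1 u2 (le_refl _) h1 h2

end Braid
namespace Braid

/-- the word `[m-1, ..., 1, 0]` -/
def desc : ℕ → List ℕ
  | 0 => []
  | m + 1 => m :: desc m

/-- the Garside word Δ_m -/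
def Delta : ℕ → List ℕ
  | 0 => []
  | m + 1 => Delta m ++ desc (m + 1)

lemma mem_desc {x m : ℕ} : x ∈ desc m ↔ x < m := by
  induction m with
  | zero => simp [desc]
  | succ m ih => simp [desc, ih]; omega

lemma mem_delta {x m : ℕ} (h : x ∈ Delta m) : x < m := by
  induction m with
  | zero => simp [Delta] at h
  | succ m ih =>
    simp [Delta] at h
    rcases h with h | h
    · have := ih h; omega
    · rw [mem_desc] at h; omega

/-- a letter commutes past a word of far-away letters -/
lemma commute_past {k : ℕ} : ∀ {l : List ℕ}, (∀ x ∈ l, Far x k) → Eqv (l ++ [k]) (k :: l) := by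
  intro l
  induction l with
  | nil => intro _; exact Eqv.rfl
  | cons a t ih =>
    intro h
    have h1 : Eqv (a :: (t ++ [k])) (a :: k :: t) := (ih (fun x hx => h x (by simp [hx]))).cons a
    exact h1.trans (swap_cons (h a (by simp)) t)

/-- D1: `desc (m+1) · σ_{i+1} ≡ σ_i · desc (m+1)` for `i + 1 ≤ m`. -/
lemma desc_shift : ∀ m i : ℕ, i + 1 ≤ m → Eqv (desc (m + 1) ++ [i + 1]) (i :: desc (m + 1)) := by
  intro m
  induction m with
  | zero => intro i h; omega
  | succ m ih =>
    intro i h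
    by_cases hm : i = m
    · -- base : i = m
      subst hm
      show Eqv ((i + 1) :: i :: (desc i ++ [i + 1])) (i :: desc (i + 2))
      have h1 : Eqv (desc i ++ [i + 1]) ((i + 1) :: desc i) := by
        apply commute_past
        intro x hx
        rw [mem_desc] at hx
        unfold Far; omega
      have h2 := (h1.cons i).cons (i + 1)
      refine h2.trans ?_
      exact braid_cons (by unfold Adj; omega) (desc i)
    · -- step : i + 1 ≤ m
      have hi : i + 1 ≤ m := by omega
      show Eqv ((m + 1) :: (desc (m + 1) ++ [i + 1])) (i :: desc (m + 2))
      refine ((ih i hi).cons (m + 1)).trans ?_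
      exact swap_cons (by unfold Far; omega) (desc (m + 1))

/-- D3 : `Delta (m+1) ≡ range (m+1) ++ Delta m`. -/
lemma delta_asc : ∀ m : ℕ, Eqv (Delta (m + 1)) (List.range (m + 1) ++ Delta m) := by
  intro m
  induction m with
  | zero =>
    rw [show List.range 1 = [0] by simp [List.range_succ]]
    exact Eqv.rfl
  | succ m ih =>
    show Eqv (Delta (m + 1) ++ desc (m + 2)) _
    refine (ih.append_right (desc (m + 2))).trans ?_
    have h1 : Eqv (Delta m ++ ((m + 1) :: desc (m + 1)))
        (((m + 1) :: Delta m) ++ desc (m + 1)) := by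
      have h0 : Eqv ((Delta m ++ [m + 1]) ++ desc (m + 1)) (((m + 1) :: Delta m) ++ desc (m + 1)) := by
        refine Eqv.append_right _ ?_
        apply commute_past
        intro x hx
        have := mem_delta hx
        unfold Far; omega
      simpa [List.append_assoc] using h0
    have h2 := h1.append_left (List.range (m + 1))
    rw [List.append_assoc]
    refine h2.trans ?_
    have e : List.range (m + 1) ++ (((m + 1) :: Delta m) ++ desc (m + 1)) =
        List.range (m + 2) ++ (Delta m ++ desc (m + 1)) := by
      rw [List.range_succ (n := m + 1)]
      simp [List.append_assoc]
    rw [e]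
    exact Eqv.rfl

/-- A1 : `range (m+1) · σ_i ≡ σ_{i+1} · range (m+1)` for `i + 1 ≤ m`. -/
lemma asc_shift : ∀ m i : ℕ, i + 1 ≤ m →
    Eqv (List.range (m + 1) ++ [i]) ((i + 1) :: List.range (m + 1)) := by
  intro m
  induction m with
  | zero => intro i h; omega
  | succ m ih =>
    intro i h
    by_cases hm : i = m
    · subst hm
      have e1 : List.range (i + 2) ++ [i] = List.range i ++ [i, i + 1, i] := by
        rw [List.range_succ, List.range_succ]; simp
      rw [e1]
      have h1 : Eqv (List.range i ++ [i, i + 1, i]) (List.range i ++ [i + 1, i, i + 1]) :=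
        Eqv.append_left _ (braid_cons (by unfold Adj; omega) [])
      refine h1.trans ?_
      have h2 : Eqv ((List.range i ++ [i + 1]) ++ [i, i + 1]) (((i + 1) :: List.range i) ++ [i, i + 1]) := by
        refine Eqv.append_right _ ?_
        apply commute_past
        intro x hx
        rw [List.mem_range] at hx
        unfold Far; omega
      have e2 : List.range i ++ [i + 1, i, i + 1] = (List.range i ++ [i + 1]) ++ [i, i + 1] := by
        simp
      have e3 : ((i + 1) :: List.range i) ++ [i, i + 1] = (i + 1) :: List.range (i + 2) := by
        rw [List.range_succ, List.range_succ]; simp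
      rw [e2, ← e3]
      exact h2
    · have hi : i + 1 ≤ m := by omega
      have e1 : List.range (m + 2) ++ [i] = List.range (m + 1) ++ [m + 1, i] := by
        rw [List.range_succ (n := m + 1)]; simp
      rw [e1]
      have h1 : Eqv (List.range (m + 1) ++ [m + 1, i]) (List.range (m + 1) ++ [i, m + 1]) :=
        Eqv.append_left _ (swap_cons (by unfold Far; omega) [])
      refine h1.trans ?_
      have e2 : List.range (m + 1) ++ [i, m + 1] = (List.range (m + 1) ++ [i]) ++ [m + 1] := by simp
      have e3 : (i + 1) :: List.range (m + 2) = ((i + 1) :: List.range (m + 1)) ++ [m + 1] := by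
        rw [List.range_succ (n := m + 1)]; simp
      rw [e2, e3]
      exact (ih i hi).append_right _

/-- Δb : `Delta m · σ_i ≡ σ_{m-1-i} · Delta m` for `i < m`. -/
lemma delta_shift : ∀ m i : ℕ, i < m → Eqv (Delta m ++ [i]) ((m - 1 - i) :: Delta m) := by
  intro m
  induction m with
  | zero => intro i h; omega
  | succ m ih =>
    intro i h
    rcases i with _ | i'
    · -- i = 0
      rcases Nat.eq_zero_or_pos m with rfl | hm
      · show Eqv ([0] ++ [0]) (0 :: [0])
        exact Eqv.rfl
      · refine ((delta_asc m).append_right [0]).trans ?_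
        rw [List.append_assoc]
        have h1 := (ih 0 hm).append_left (List.range (m + 1))
        refine h1.trans ?_
        have e1 : List.range (m + 1) ++ ((m - 1 - 0) :: Delta m) =
            (List.range (m + 1) ++ [m - 1]) ++ Delta m := by simp
        rw [e1]
        have h2 : Eqv ((List.range (m + 1) ++ [m - 1]) ++ Delta m)
            ((m :: List.range (m + 1)) ++ Delta m) := by
          refine Eqv.append_right _ ?_
          have h3 := asc_shift m (m - 1) (by omega)
          have e : m - 1 + 1 = m := by omega
          rw [e] at h3
          exact h3
        refine h2.trans ?_
        show Eqv (m :: (List.range (m + 1) ++ Delta m)) ((m + 1 - 1 - 0) :: Delta (m + 1))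
        have e2 : m + 1 - 1 - 0 = m := by omega
        rw [e2]
        exact ((delta_asc m).symm).cons m
    · -- i = i' + 1
      have hi : i' + 1 ≤ m := by omega
      show Eqv ((Delta m ++ desc (m + 1)) ++ [i' + 1]) ((m + 1 - 1 - (i' + 1)) :: Delta (m + 1))
      rw [List.append_assoc]
      refine ((desc_shift m i' hi).append_left (Delta m)).trans ?_
      have e1 : Delta m ++ (i' :: desc (m + 1)) = (Delta m ++ [i']) ++ desc (m + 1) := by simp
      rw [e1]
      refine ((ih i' (by omega)).append_right (desc (m + 1))).trans ?_
      have e2 : m + 1 - 1 - (i' + 1) = m - 1 - i' := by omega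
      rw [e2]
      exact Eqv.rfl

end Braid
namespace Braid

def tau (m k : ℕ) : ℕ := m - 1 - k

lemma Step.map_tau {m : ℕ} {u v : List ℕ} (h : Step u v) (hu : ∀ x ∈ u, x < m) :
    Step (u.map (tau m)) (v.map (tau m)) := by
  cases h with
  | @comm a b i j hf =>
    have hi : i < m := hu i (by simp)
    have hj : j < m := hu j (by simp)
    have e1 : (a ++ i :: j :: b).map (tau m) = a.map (tau m) ++ tau m i :: tau m j :: b.map (tau m) := by simp
    have e2 : (a ++ j :: i :: b).map (tau m) = a.map (tau m) ++ tau m j :: tau m i :: b.map (tau m) := by simp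
    rw [e1, e2]
    refine Step.comm _ _ ?_
    unfold Far at hf ⊢; unfold tau; omega
  | @braid a b i j hf =>
    have hi : i < m := hu i (by simp)
    have hj : j < m := hu j (by simp)
    have e1 : (a ++ i :: j :: i :: b).map (tau m) =
        a.map (tau m) ++ tau m i :: tau m j :: tau m i :: b.map (tau m) := by simp
    have e2 : (a ++ j :: i :: j :: b).map (tau m) =
        a.map (tau m) ++ tau m j :: tau m i :: tau m j :: b.map (tau m) := by simp
    rw [e1, e2]
    refine Step.braid _ _ ?_
    unfold Adj at hf ⊢; unfold tau; omega

lemma Eqv.map_tau {m : ℕ} {u v : List ℕ} (h : Eqv u v) (hu : ∀ x ∈ u, x < m) :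
    Eqv (u.map (tau m)) (v.map (tau m)) := by
  induction h with
  | refl => exact .rfl
  | tail hc h ih =>
    have hb := Eqv.mem_imp hc (fun x => x < m) hu
    exact ih.trans (h.map_tau hb).eqv

lemma delta_conj (m : ℕ) : ∀ u : List ℕ, (∀ x ∈ u, x < m) →
    Eqv (Delta m ++ u) (u.map (tau m) ++ Delta m) := by
  intro u
  induction u with
  | nil => intro _; simpa using Eqv.rfl
  | cons k u ih =>
    intro hu
    have e1 : Delta m ++ k :: u = (Delta m ++ [k]) ++ u := by simp
    rw [e1]
    refine ((delta_shift m k (hu k (by simp))).append_right u).trans ?_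
    show Eqv (tau m k :: (Delta m ++ u)) _
    exact (ih (fun x hx => hu x (by simp [hx]))).cons _

lemma delta_tau (m : ℕ) : Eqv (Delta m) ((Delta m).map (tau m)) :=
  cancel_suffix (Delta m) (delta_conj m (Delta m) (fun _ hx => mem_delta hx))

lemma map_tau_tau {m : ℕ} {u : List ℕ} (hu : ∀ x ∈ u, x < m) :
    (u.map (tau m)).map (tau m) = u := by
  induction u with
  | nil => rfl
  | cons a t ih =>
    simp only [List.map_cons]
    rw [ih (fun x hx => hu x (by simp [hx]))]
    have := hu a (by simp)
    congr 1
    unfold tau; omega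

lemma mem_map_tau {m : ℕ} {u : List ℕ} (hm : 0 < m) (hu : ∀ x ∈ u, x < m) :
    ∀ x ∈ u.map (tau m), x < m := by
  intro x hx
  simp only [List.mem_map] at hx
  obtain ⟨a, _, rfl⟩ := hx
  unfold tau; omega

lemma delta_div : ∀ m i : ℕ, i < m → ∃ w, Eqv (Delta m) (i :: w) := by
  intro m
  induction m with
  | zero => intro i h; omega
  | succ m ih =>
    intro i h
    by_cases hi : i < m
    · obtain ⟨w, hw⟩ := ih i hi
      refine ⟨w ++ desc (m + 1), ?_⟩
      show Eqv (Delta m ++ desc (m + 1)) _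
      have := hw.append_right (desc (m + 1))
      simpa using this
    · obtain rfl : i = m := by omega
      have h0 : Eqv (Delta (i + 1)) (0 :: (List.map Nat.succ (List.range i) ++ Delta i)) := by
        refine (delta_asc i).trans ?_
        rw [List.range_succ_eq_map]
        exact Eqv.rfl
      have hb : ∀ x ∈ Delta (i + 1), x < i + 1 := fun _ hx => mem_delta hx
      have h1 := (delta_tau (i + 1)).trans ((h0.map_tau hb))
      refine ⟨(List.map Nat.succ (List.range i) ++ Delta i).map (tau (i + 1)), h1.trans ?_⟩
      rw [List.map_cons]
      have he : tau (i + 1) 0 = i := by unfold tau; omega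
      rw [he]

/-- Δ^k -/
def Deltas (m : ℕ) : ℕ → List ℕ
  | 0 => []
  | k + 1 => Delta m ++ Deltas m k

lemma deltas_add (m a b : ℕ) : Deltas m (a + b) = Deltas m a ++ Deltas m b := by
  induction a with
  | zero => simp [Deltas]
  | succ a ih =>
    rw [show a + 1 + b = (a + b) + 1 by omega]
    show Delta m ++ Deltas m (a + b) = (Delta m ++ Deltas m a) ++ Deltas m b
    rw [ih, List.append_assoc]

lemma comm_deltas (m : ℕ) : ∀ (k : ℕ) (u : List ℕ), (∀ x ∈ u, x < m) →
    ∃ u', (∀ x ∈ u', x < m) ∧ Eqv (u ++ Deltas m k) (Deltas m k ++ u') := by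
  intro k
  induction k with
  | zero => intro u hu; exact ⟨u, hu, by simpa [Deltas] using Eqv.rfl⟩
  | succ k ih =>
    intro u hu
    rcases Nat.eq_zero_or_pos m with rfl | hm
    · -- no letters
      rcases u with _ | ⟨a, u⟩
      · exact ⟨[], by simp, by simpa using Eqv.rfl⟩
      · exact absurd (hu a (by simp)) (by omega)
    have hmt := mem_map_tau hm hu
    have h1 : Eqv (u ++ Delta m) (Delta m ++ u.map (tau m)) := by
      have := delta_conj m (u.map (tau m)) hmt
      rw [map_tau_tau hu] at this
      exact this.symm
    obtain ⟨u', hu', h2⟩ := ih (u.map (tau m)) hmt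
    refine ⟨u', hu', ?_⟩
    show Eqv (u ++ (Delta m ++ Deltas m k)) ((Delta m ++ Deltas m k) ++ u')
    rw [← List.append_assoc]
    refine (h1.append_right (Deltas m k)).trans ?_
    rw [List.append_assoc, List.append_assoc]
    exact h2.append_left (Delta m)

lemma dvd_deltas (m : ℕ) : ∀ u : List ℕ, (∀ x ∈ u, x < m) → Dvd u (Deltas m u.length) := by
  intro u
  induction u with
  | nil => intro _; exact dvd_nil _
  | cons i u ih =>
    intro hu
    obtain ⟨w, hw⟩ := delta_div m i (hu i (by simp))
    have hwb : ∀ x ∈ w, x < m := by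
      have := hw.mem_imp (fun x => x < m) (fun x hx => mem_delta hx)
      intro x hx; exact this x (by simp [hx])
    obtain ⟨y, hy⟩ := ih (fun x hx => hu x (by simp [hx]))
    obtain ⟨w', hw'b, hcomm⟩ := comm_deltas m u.length w hwb
    refine ⟨y ++ w', ?_⟩
    show Eqv (Delta m ++ Deltas m u.length) _
    refine ((hw.append_right (Deltas m u.length)).trans ?_)
    show Eqv (i :: (w ++ Deltas m u.length)) _
    refine (hcomm.cons i).trans ?_
    have h3 : Eqv (Deltas m u.length ++ w') ((u ++ y) ++ w') := hy.append_right w'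
    refine (h3.cons i).trans ?_
    rw [show (i :: u) ++ (y ++ w') = i :: (u ++ (y ++ w')) by simp, List.append_assoc]

lemma le_foldr_max : ∀ (l : List ℕ), ∀ x ∈ l, x ≤ l.foldr max 0 := by
  intro l
  induction l with
  | nil => simp
  | cons a t ih =>
    intro x hx
    rcases List.mem_cons.mp hx with rfl | hx
    · exact le_max_left _ _
    · exact le_trans (ih x hx) (le_max_right _ _)

/-- any two positive braid words admit a common right multiple -/
theorem common_mult (u v : List ℕ) : ∃ c, Dvd u c ∧ Dvd v c := by
  set m := (u ++ v).foldr max 0 + 1 with hm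
  have hub : ∀ x ∈ u, x < m := by
    intro x hx
    have := le_foldr_max (u ++ v) x (by simp [hx]); omega
  have hvb : ∀ x ∈ v, x < m := by
    intro x hx
    have := le_foldr_max (u ++ v) x (by simp [hx]); omega
  set K := max u.length v.length with hK
  refine ⟨Deltas m K, ?_, ?_⟩
  · have := (dvd_deltas m u hub).append_right (Deltas m (K - u.length))
    rw [← deltas_add, show u.length + (K - u.length) = K by omega] at this
    exact this
  · have := (dvd_deltas m v hvb).append_right (Deltas m (K - v.length))
    rw [← deltas_add, show v.length + (K - v.length) = K by omega] at this
    exact this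

/-- any two positive braid words admit a common left multiple -/
theorem common_mult_left (u v : List ℕ) : ∃ x y, Eqv (x ++ u) (y ++ v) := by
  obtain ⟨c, ⟨x, hx⟩, ⟨y, hy⟩⟩ := common_mult u.reverse v.reverse
  refine ⟨x.reverse, y.reverse, ?_⟩
  have h1 := hx.rev
  have h2 := hy.rev
  simp only [List.reverse_append, List.reverse_reverse] at h1 h2
  exact h1.symm.trans h2

end Braid
namespace Braid

/-- fractions: `(b, a)` represents `π(b) π(a)⁻¹` -/
def FR (p q : List ℕ × List ℕ) : Prop :=
  ∃ x y, Eqv (p.2 ++ x) (q.2 ++ y) ∧ Eqv (p.1 ++ x) (q.1 ++ y)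

lemma FR.refl (p : List ℕ × List ℕ) : FR p p := ⟨[], [], Eqv.rfl, Eqv.rfl⟩

lemma FR.symm {p q} (h : FR p q) : FR q p := by
  obtain ⟨x, y, h1, h2⟩ := h; exact ⟨y, x, h1.symm, h2.symm⟩

lemma FR.trans {p q r} (h : FR p q) (h' : FR q r) : FR p r := by
  obtain ⟨x, y, h1, h2⟩ := h
  obtain ⟨x', y', h1', h2'⟩ := h'
  obtain ⟨c, ⟨s, hs⟩, ⟨t, ht⟩⟩ := common_mult y x'
  have hys : Eqv (y ++ s) (x' ++ t) := hs.symm.trans ht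
  refine ⟨x ++ s, y' ++ t, ?_, ?_⟩
  · have s1 : Eqv ((p.2 ++ x) ++ s) ((q.2 ++ y) ++ s) := h1.append_right s
    have s2 : Eqv ((q.2 ++ y) ++ s) ((q.2 ++ x') ++ t) := by
      have := hys.append_left q.2; simpa [List.append_assoc] using this
    have s3 : Eqv ((q.2 ++ x') ++ t) ((r.2 ++ y') ++ t) := h1'.append_right t
    have := (s1.trans s2).trans s3
    simpa [List.append_assoc] using this
  · have s1 : Eqv ((p.1 ++ x) ++ s) ((q.1 ++ y) ++ s) := h2.append_right s
    have s2 : Eqv ((q.1 ++ y) ++ s) ((q.1 ++ x') ++ t) := by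
      have := hys.append_left q.1; simpa [List.append_assoc] using this
    have s3 : Eqv ((q.1 ++ x') ++ t) ((r.1 ++ y') ++ t) := h2'.append_right t
    have := (s1.trans s2).trans s3
    simpa [List.append_assoc] using this

instance fracSetoid : Setoid (List ℕ × List ℕ) :=
  ⟨FR, FR.refl, FR.symm, FR.trans⟩

def Frac : Type := Quotient fracSetoid

/-- prepending a generator -/
def ffwd (k : ℕ) : Frac → Frac :=
  Quotient.map (fun p => (k :: p.1, p.2)) (by
    rintro ⟨b, a⟩ ⟨d, c⟩ ⟨x, y, h1, h2⟩
    exact ⟨x, y, h1, h2.cons k⟩)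

lemma exists_inv (k : ℕ) (b : List ℕ) : ∃ x w, Eqv (b ++ x) (k :: w) := by
  obtain ⟨c, ⟨x, hx⟩, ⟨w, hw⟩⟩ := common_mult b [k]
  exact ⟨x, w, hx.symm.trans hw⟩

/-- key well-definedness lemma for the inverse action -/
lemma inv_wd {k : ℕ} {b a x w d c z v : List ℕ}
    (h1 : Eqv (b ++ x) (k :: w)) (h2 : Eqv (d ++ z) (k :: v))
    (h : FR (b, a) (d, c)) : FR (w, a ++ x) (v, c ++ z) := by
  obtain ⟨s, t, hst1, hst2⟩ := h
  simp only at hst1 hst2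
  obtain ⟨c₀, ⟨p, hp⟩, ⟨q, hq⟩⟩ := common_mult x s
  have hxp : Eqv (x ++ p) (s ++ q) := hp.symm.trans hq
  obtain ⟨c₁, ⟨p', hp'⟩, ⟨q', hq'⟩⟩ := common_mult (t ++ q) z
  have htq : Eqv ((t ++ q) ++ p') (z ++ q') := hp'.symm.trans hq'
  -- k :: (w ++ p ++ p') ~ d ++ z ++ q' ~ k :: (v ++ q')
  have e1 : Eqv (k :: (w ++ (p ++ p'))) (d ++ (z ++ q')) := by
    have s1 : Eqv ((b ++ x) ++ (p ++ p')) (k :: (w ++ (p ++ p'))) := by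
      have := h1.append_right (p ++ p')
      simpa [List.append_assoc] using this
    refine s1.symm.trans ?_
    have s2 : Eqv ((b ++ x) ++ (p ++ p')) ((b ++ s) ++ (q ++ p')) := by
      have := hxp.append_right p'
      have h' := this.append_left b
      simpa [List.append_assoc] using h'
    refine s2.trans ?_
    have s3 : Eqv ((b ++ s) ++ (q ++ p')) ((d ++ t) ++ (q ++ p')) := by
      have := hst2.append_right (q ++ p')
      simpa [List.append_assoc] using this
    refine s3.trans ?_
    have s4 : Eqv ((d ++ t) ++ (q ++ p')) (d ++ (z ++ q')) := by
      have := htq.append_left d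
      simpa [List.append_assoc] using this
    exact s4
  have e2 : Eqv (k :: (w ++ (p ++ p'))) (k :: (v ++ q')) := by
    refine e1.trans ?_
    have := h2.append_right q'
    have h' : Eqv ((d ++ z) ++ q') (k :: (v ++ q')) := by simpa [List.append_assoc] using this
    have e : d ++ (z ++ q') = (d ++ z) ++ q' := by simp
    rw [e]
    exact h'
  have hwv : Eqv (w ++ (p ++ p')) (v ++ q') := cancel e2
  refine ⟨p ++ p', q', ?_, ?_⟩
  · -- (a ++ x) ++ (p ++ p') ~ (c ++ z) ++ q'
    show Eqv ((a ++ x) ++ (p ++ p')) ((c ++ z) ++ q')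
    have s2 : Eqv ((a ++ x) ++ (p ++ p')) ((a ++ s) ++ (q ++ p')) := by
      have := (hxp.append_right p').append_left a
      simpa [List.append_assoc] using this
    refine s2.trans ?_
    have s3 : Eqv ((a ++ s) ++ (q ++ p')) ((c ++ t) ++ (q ++ p')) := by
      have := hst1.append_right (q ++ p')
      simpa [List.append_assoc] using this
    refine s3.trans ?_
    have := htq.append_left c
    simpa [List.append_assoc] using this
  · exact hwv

noncomputable def finv (k : ℕ) : Frac → Frac :=
  Quotient.lift
    (fun p => Quotient.mk fracSetoid
      ((exists_inv k p.1).choose_spec.choose, p.2 ++ (exists_inv k p.1).choose))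
    (by
      rintro ⟨b, a⟩ ⟨d, c⟩ h
      apply Quotient.sound
      exact inv_wd (exists_inv k b).choose_spec.choose_spec
        (exists_inv k d).choose_spec.choose_spec h)

lemma ffwd_finv (k : ℕ) (x : Frac) : ffwd k (finv k x) = x := by
  induction x using Quotient.inductionOn with
  | _ p =>
  obtain ⟨b, a⟩ := p
  have hspec := (exists_inv k b).choose_spec.choose_spec
  apply Quotient.sound
  refine ⟨[], (exists_inv k b).choose, ?_, ?_⟩
  · simpa using Eqv.rfl
  · simpa using hspec.symm

lemma finv_ffwd (k : ℕ) (x : Frac) : finv k (ffwd k x) = x := by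
  induction x using Quotient.inductionOn with
  | _ p =>
  obtain ⟨b, a⟩ := p
  have hspec := (exists_inv k (k :: b)).choose_spec.choose_spec
  have hc : Eqv (k :: (b ++ (exists_inv k (k :: b)).choose))
      (k :: (exists_inv k (k :: b)).choose_spec.choose) := by
    simpa using hspec
  have hcan := cancel hc
  apply Quotient.sound
  refine ⟨[], (exists_inv k (k :: b)).choose, ?_, ?_⟩
  · simpa using Eqv.rfl
  · simpa using hcan.symm

/-- the permutation of `Frac` given by a generator -/
noncomputable def permk (k : ℕ) : Equiv.Perm Frac :=
  ⟨ffwd k, finv k, finv_ffwd k, ffwd_finv k⟩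

lemma frac_eq_of_eqv {b b' a : List ℕ} (h : Eqv b b') :
    (Quotient.mk fracSetoid (b, a) : Frac) = Quotient.mk fracSetoid (b', a) := by
  apply Quotient.sound
  exact ⟨[], [], Eqv.rfl, by simpa using h⟩

lemma permk_mk (k : ℕ) (b a : List ℕ) :
    permk k (Quotient.mk fracSetoid (b, a)) = Quotient.mk fracSetoid (k :: b, a) := rfl

lemma permk_comm {k l : ℕ} (h : Far k l) : permk k * permk l = permk l * permk k := by
  apply Equiv.ext
  intro x
  induction x using Quotient.inductionOn with
  | _ p =>
  obtain ⟨b, a⟩ := p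
  show permk k (permk l (Quotient.mk fracSetoid (b, a))) =
    permk l (permk k (Quotient.mk fracSetoid (b, a)))
  rw [permk_mk, permk_mk, permk_mk, permk_mk]
  exact frac_eq_of_eqv (swap_cons h b)

lemma permk_braid {k l : ℕ} (h : Adj k l) :
    permk k * permk l * permk k = permk l * permk k * permk l := by
  apply Equiv.ext
  intro x
  induction x using Quotient.inductionOn with
  | _ p =>
  obtain ⟨b, a⟩ := p
  show permk k (permk l (permk k (Quotient.mk fracSetoid (b, a)))) =
    permk l (permk k (permk l (Quotient.mk fracSetoid (b, a))))
  rw [permk_mk, permk_mk, permk_mk, permk_mk, permk_mk, permk_mk]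
  exact frac_eq_of_eqv (braid_cons h.symm b).symm

end Braid
namespace Braid

variable {N : ℕ}

/-- generators indexed by `ℕ` -/
noncomputable def gensy (N : ℕ) (k : ℕ) : PresentedGroup (braidRels N) :=
  if h : k < N then PresentedGroup.of ⟨k, h⟩ else 1

/-- the image of a positive word in the braid group -/
noncomputable def piw (N : ℕ) (l : List ℕ) : PresentedGroup (braidRels N) :=
  (l.map (gensy N)).prod

lemma piw_append (a b : List ℕ) : piw N (a ++ b) = piw N a * piw N b := by
  simp [piw]

lemma piw_cons (k : ℕ) (l : List ℕ) : piw N (k :: l) = gensy N k * piw N l := by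
  simp [piw]

lemma piw_nil : piw N [] = 1 := rfl

lemma rel_eq_one {r : FreeGroup (Fin N)} (hr : r ∈ braidRels N) :
    PresentedGroup.mk (braidRels N) r = 1 :=
  (QuotientGroup.eq_one_iff r).2 (Subgroup.subset_normalClosure hr)

lemma of_far {i j : Fin N} (h : (i : ℕ) + 2 ≤ (j : ℕ)) :
    (PresentedGroup.of i : PresentedGroup (braidRels N)) * PresentedGroup.of j =
      PresentedGroup.of j * PresentedGroup.of i := by
  have hmem : (FreeGroup.of i * FreeGroup.of j * (FreeGroup.of j * FreeGroup.of i)⁻¹) ∈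
      braidRels N := Or.inl ⟨i, j, h, rfl⟩
  have h1 := rel_eq_one hmem
  rw [map_mul, map_mul, map_inv, map_mul] at h1
  exact mul_inv_eq_one.mp h1

lemma of_adj {i j : Fin N} (h : (i : ℕ) + 1 = (j : ℕ)) :
    (PresentedGroup.of i : PresentedGroup (braidRels N)) * PresentedGroup.of j *
        PresentedGroup.of i =
      PresentedGroup.of j * PresentedGroup.of i * PresentedGroup.of j := by
  have hmem : (FreeGroup.of i * FreeGroup.of j * FreeGroup.of i *
      (FreeGroup.of j * FreeGroup.of i * FreeGroup.of j)⁻¹) ∈ braidRels N :=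
    Or.inr ⟨i, j, h, rfl⟩
  have h1 := rel_eq_one hmem
  rw [map_mul, map_mul, map_mul, map_inv, map_mul, map_mul] at h1
  exact mul_inv_eq_one.mp h1

lemma gensy_far {i j : ℕ} (h : Far i j) : gensy N i * gensy N j = gensy N j * gensy N i := by
  unfold gensy
  split_ifs with hi hj hj
  · rcases h with h | h
    · exact of_far h
    · exact (of_far h).symm
  · simp
  · simp
  · simp

lemma gensy_braid {i j : ℕ} (h : Adj i j) (hi : i < N) (hj : j < N) :
    gensy N i * gensy N j * gensy N i = gensy N j * gensy N i * gensy N j := by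
  unfold gensy
  rw [dif_pos hi, dif_pos hj]
  rcases h with h | h
  · exact of_adj h
  · exact (of_adj h).symm

lemma pi_step {u v : List ℕ} (h : Step u v) (hu : ∀ x ∈ u, x < N) : piw N u = piw N v := by
  cases h with
  | @comm a b i j hf =>
    have hcomm : gensy N i * gensy N j = gensy N j * gensy N i := gensy_far hf
    simp only [piw_append, piw_cons]
    rw [← mul_assoc (gensy N i) (gensy N j), hcomm, mul_assoc]
  | @braid a b i j hf =>
    have hi : i < N := hu i (by simp)
    have hj : j < N := hu j (by simp)
    have hbr := gensy_braid hf hi hj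
    simp only [piw_append, piw_cons]
    rw [← mul_assoc (gensy N i) (gensy N j), ← mul_assoc (gensy N i * gensy N j), hbr,
      mul_assoc (gensy N j * gensy N i), mul_assoc (gensy N j)]

lemma pi_eqv {u v : List ℕ} (h : Eqv u v) (hu : ∀ x ∈ u, x < N) : piw N u = piw N v := by
  induction h with
  | refl => rfl
  | tail hc h ih =>
    have hb := Eqv.mem_imp hc (fun x => x < N) hu
    exact ih.trans (pi_step h hb)

/-- the braid group acts on fractions -/
noncomputable def toPerm (N : ℕ) : PresentedGroup (braidRels N) →* Equiv.Perm Frac :=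
  PresentedGroup.toGroup (f := fun i : Fin N => permk (i : ℕ)) (by
    intro r hr
    rcases hr with ⟨i, j, hij, rfl⟩ | ⟨i, j, hij, rfl⟩
    · simp only [map_mul, map_inv, FreeGroup.lift_apply_of]
      rw [mul_inv_eq_one]
      exact permk_comm (Or.inl hij)
    · simp only [map_mul, map_inv, FreeGroup.lift_apply_of]
      rw [mul_inv_eq_one]
      exact permk_braid (Or.inl hij))

lemma toPerm_gensy {k : ℕ} (hk : k < N) : toPerm N (gensy N k) = permk k := by
  unfold gensy
  rw [dif_pos hk]
  exact PresentedGroup.toGroup.of _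

lemma toPerm_piw {u : List ℕ} (hu : ∀ x ∈ u, x < N) (l a : List ℕ) :
    toPerm N (piw N u) (Quotient.mk fracSetoid (l, a)) = Quotient.mk fracSetoid (u ++ l, a) := by
  induction u with
  | nil => rw [piw_nil, map_one]; rfl
  | cons k u ih =>
    rw [piw_cons, map_mul]
    have hk : k < N := hu k (by simp)
    rw [toPerm_gensy hk]
    show permk k (toPerm N (piw N u) (Quotient.mk fracSetoid (l, a))) = _
    rw [ih (fun x hx => hu x (by simp [hx])), permk_mk]
    rfl

/-- the fundamental embedding property : `π` is injective on positive words -/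
theorem pi_inj {u v : List ℕ} (hu : ∀ x ∈ u, x < N) (hv : ∀ x ∈ v, x < N)
    (h : piw N u = piw N v) : Eqv u v := by
  have h1 := congrArg (fun g : PresentedGroup (braidRels N) =>
    toPerm N g (Quotient.mk fracSetoid ([], []))) h
  rw [toPerm_piw hu, toPerm_piw hv] at h1
  have h2 := Quotient.exact h1
  obtain ⟨x, y, hxy1, hxy2⟩ := h2
  simp only [List.append_nil, List.nil_append] at hxy1 hxy2
  have : Eqv (v ++ y) (v ++ x) := hxy1.symm.append_left v
  exact cancel_suffix x (hxy2.trans this)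

end Braid
namespace Braid

lemma mem_deltas {x m k : ℕ} (h : x ∈ Deltas m k) : x < m := by
  induction k with
  | zero => simp [Deltas] at h
  | succ k ih =>
    simp only [Deltas, List.mem_append] at h
    rcases h with h | h
    · exact mem_delta h
    · exact ih h

/-- bounded common multiples -/
theorem common_mult_bdd (M : ℕ) (u v : List ℕ) (hu : ∀ x ∈ u, x < M) (hv : ∀ x ∈ v, x < M) :
    ∃ c, (∀ x ∈ c, x < M) ∧ Dvd u c ∧ Dvd v c := by
  set K := max u.length v.length with hK
  refine ⟨Deltas M K, fun x hx => mem_deltas hx, ?_, ?_⟩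
  · have := (dvd_deltas M u hu).append_right (Deltas M (K - u.length))
    rw [← deltas_add, show u.length + (K - u.length) = K by omega] at this
    exact this
  · have := (dvd_deltas M v hv).append_right (Deltas M (K - v.length))
    rw [← deltas_add, show v.length + (K - v.length) = K by omega] at this
    exact this

theorem common_mult_left_bdd (M : ℕ) (u v : List ℕ) (hu : ∀ x ∈ u, x < M)
    (hv : ∀ x ∈ v, x < M) :
    ∃ x y, (∀ a ∈ x, a < M) ∧ (∀ a ∈ y, a < M) ∧ Eqv (x ++ u) (y ++ v) := by
  obtain ⟨c, hc, ⟨x, hx⟩, ⟨y, hy⟩⟩ := common_mult_bdd M u.reverse v.reverse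
    (by intro a ha; exact hu a (by simpa using ha))
    (by intro a ha; exact hv a (by simpa using ha))
  have hxb : ∀ a ∈ x, a < M := by
    have := Eqv.mem_imp hx (fun a => a < M) hc
    intro a ha; exact this a (by simp [ha])
  have hyb : ∀ a ∈ y, a < M := by
    have := Eqv.mem_imp hy (fun a => a < M) hc
    intro a ha; exact this a (by simp [ha])
  refine ⟨x.reverse, y.reverse, by simpa using hxb, by simpa using hyb, ?_⟩
  have h1 := hx.rev
  have h2 := hy.rev
  simp only [List.reverse_append, List.reverse_reverse] at h1 h2
  exact h1.symm.trans h2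

variable {N : ℕ}

/-- bounded words -/
def Bdd (N : ℕ) (l : List ℕ) : Prop := ∀ x ∈ l, x < N

/-- the prefix (divisibility) order on the braid group -/
def le' (N : ℕ) (g h : PresentedGroup (braidRels N)) : Prop :=
  ∃ l, Bdd N l ∧ h = g * piw N l

lemma le'_refl (g : PresentedGroup (braidRels N)) : le' N g g :=
  ⟨[], by simp [Bdd], by simp [piw_nil]⟩

lemma le'_trans {g h k : PresentedGroup (braidRels N)} (h1 : le' N g h) (h2 : le' N h k) :
    le' N g k := by
  obtain ⟨l, hl, rfl⟩ := h1
  obtain ⟨l', hl', rfl⟩ := h2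
  refine ⟨l ++ l', ?_, by rw [piw_append, mul_assoc]⟩
  intro x hx
  rcases List.mem_append.mp hx with hx | hx
  · exact hl x hx
  · exact hl' x hx

lemma le'_mul_left {g h : PresentedGroup (braidRels N)} (c : PresentedGroup (braidRels N))
    (h1 : le' N g h) : le' N (c * g) (c * h) := by
  obtain ⟨l, hl, rfl⟩ := h1
  exact ⟨l, hl, by rw [mul_assoc]⟩

lemma le'_of_mul_left {g h : PresentedGroup (braidRels N)} (c : PresentedGroup (braidRels N))
    (h1 : le' N (c * g) (c * h)) : le' N g h := by
  obtain ⟨l, hl, he⟩ := h1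
  rw [mul_assoc] at he
  exact ⟨l, hl, mul_left_cancel he⟩

/-- the exponent-sum homomorphism -/
noncomputable def expo (N : ℕ) : PresentedGroup (braidRels N) →* Multiplicative ℤ :=
  PresentedGroup.toGroup (f := fun _ => Multiplicative.ofAdd (1 : ℤ)) (by
    intro r hr
    rcases hr with ⟨i, j, _, rfl⟩ | ⟨i, j, _, rfl⟩ <;>
      simp only [map_mul, map_inv, FreeGroup.lift_apply_of] <;> group)

lemma expo_piw {l : List ℕ} (hl : Bdd N l) :
    expo N (piw N l) = Multiplicative.ofAdd (l.length : ℤ) := by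
  induction l with
  | nil => simp [piw_nil]
  | cons k l ih =>
    rw [piw_cons, map_mul]
    have hk : k < N := hl k (by simp)
    have h1 : expo N (gensy N k) = Multiplicative.ofAdd (1 : ℤ) := by
      unfold gensy
      rw [dif_pos hk]
      exact PresentedGroup.toGroup.of _
    rw [h1, ih (fun x hx => hl x (by simp [hx]))]
    rw [← ofAdd_add]
    congr 1
    simp only [List.length_cons]
    push_cast
    ring

lemma piw_eq_one_iff {l : List ℕ} (hl : Bdd N l) : piw N l = 1 ↔ l = [] := by
  constructor
  · intro h
    have := expo_piw hl
    rw [h, map_one] at this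
    have h2 : (l.length : ℤ) = 0 := by
      have := congrArg Multiplicative.toAdd this
      simpa using this.symm
    have : l.length = 0 := by omega
    exact List.length_eq_zero_iff.mp this
  · rintro rfl; rfl

lemma le'_antisymm {g h : PresentedGroup (braidRels N)} (h1 : le' N g h) (h2 : le' N h g) :
    g = h := by
  obtain ⟨l, hl, rfl⟩ := h1
  obtain ⟨l', hl', he⟩ := h2
  have h3 : g * (piw N l * piw N l') = g * 1 := by
    rw [mul_one]; rw [mul_assoc] at he; exact he.symm
  have h4 : piw N l * piw N l' = 1 := mul_left_cancel h3
  rw [← piw_append] at h4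
  have h5 : l ++ l' = [] := (piw_eq_one_iff (by
    intro x hx
    rcases List.mem_append.mp hx with hx | hx
    · exact hl x hx
    · exact hl' x hx)).mp h4
  rcases List.append_eq_nil_iff.mp h5 with ⟨rfl, rfl⟩
  rw [piw_nil, mul_one]

/-- every element is a left fraction -/
theorem frac_form (g : PresentedGroup (braidRels N)) :
    ∃ a b, Bdd N a ∧ Bdd N b ∧ g = (piw N a)⁻¹ * piw N b := by
  let H : Subgroup (PresentedGroup (braidRels N)) :=
    { carrier := {g | ∃ a b, Bdd N a ∧ Bdd N b ∧ g = (piw N a)⁻¹ * piw N b}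
      one_mem' := ⟨[], [], by simp [Bdd], by simp [Bdd], by simp [piw_nil]⟩
      mul_mem' := by
        rintro g h ⟨a, b, ha, hb, rfl⟩ ⟨c, d, hc, hd, rfl⟩
        obtain ⟨x, y, hx, hy, hxy⟩ := common_mult_left_bdd N b c hb hc
        refine ⟨x ++ a, y ++ d, ?_, ?_, ?_⟩
        · intro z hz; rcases List.mem_append.mp hz with hz | hz
          exacts [hx z hz, ha z hz]
        · intro z hz; rcases List.mem_append.mp hz with hz | hz
          exacts [hy z hz, hd z hz]
        · have hpi : piw N (x ++ b) = piw N (y ++ c) := pi_eqv hxy (by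
            intro z hz; rcases List.mem_append.mp hz with hz | hz
            exacts [hx z hz, hb z hz])
          rw [piw_append, piw_append] at hpi
          have key : piw N b * (piw N c)⁻¹ = (piw N x)⁻¹ * piw N y := by
            have hb2 : piw N b = (piw N x)⁻¹ * (piw N y * piw N c) := by
              rw [← hpi]; group
            rw [hb2]; group
          have final : (piw N a)⁻¹ * piw N b * ((piw N c)⁻¹ * piw N d) =
              (piw N a)⁻¹ * (piw N b * (piw N c)⁻¹) * piw N d := by group
          rw [final, key, piw_append, piw_append, mul_inv_rev]
          group
      inv_mem' := by
        rintro g ⟨a, b, ha, hb, rfl⟩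
        exact ⟨b, a, hb, ha, by group⟩ }
  have hg : g ∈ H := by
    apply PresentedGroup.generated_by
    intro j
    refine ⟨[], [(j : ℕ)], by simp [Bdd], ?_, ?_⟩
    · intro x hx
      simp at hx
      subst hx
      exact j.isLt
    · rw [piw_nil]
      show PresentedGroup.of j = 1⁻¹ * piw N [(j : ℕ)]
      rw [inv_one, one_mul, piw_cons, piw_nil, mul_one]
      unfold gensy
      rw [dif_pos j.isLt]
  exact hg

lemma lower_bound_pair (g h : PresentedGroup (braidRels N)) :
    ∃ c, le' N c g ∧ le' N c h := by
  obtain ⟨a, b, ha, hb, rfl⟩ := frac_form g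
  obtain ⟨a', b', ha', hb', rfl⟩ := frac_form h
  obtain ⟨x, y, hx, hy, hxy⟩ := common_mult_left_bdd N a a' ha ha'
  refine ⟨(piw N (x ++ a))⁻¹, ⟨x ++ b, ?_, ?_⟩, ⟨y ++ b', ?_, ?_⟩⟩
  · intro z hz; rcases List.mem_append.mp hz with hz | hz
    exacts [hx z hz, hb z hz]
  · rw [piw_append, piw_append, mul_inv_rev]
    group
  · intro z hz; rcases List.mem_append.mp hz with hz | hz
    exacts [hy z hz, hb' z hz]
  · have hpi : piw N (x ++ a) = piw N (y ++ a') := pi_eqv hxy (by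
      intro z hz; rcases List.mem_append.mp hz with hz | hz
      exacts [hx z hz, ha z hz])
    rw [hpi, piw_append, piw_append, mul_inv_rev]
    group

lemma lower_bound_list (L : List (PresentedGroup (braidRels N))) :
    ∃ c, ∀ g ∈ L, le' N c g := by
  induction L with
  | nil => exact ⟨1, by simp⟩
  | cons g L ih =>
    obtain ⟨c, hc⟩ := ih
    obtain ⟨c', hc'1, hc'2⟩ := lower_bound_pair g c
    refine ⟨c', ?_⟩
    intro z hz
    rcases List.mem_cons.mp hz with rfl | hz
    · exact hc'1
    · exact le'_trans hc'2 (hc z hz)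

end Braid
namespace Braid

variable {N : ℕ}

lemma map_val_pmap (u : List ℕ) (hu : ∀ x ∈ u, x < N) :
    ((u.pmap (fun a h => (⟨a, h⟩ : Fin N)) hu).map Fin.val) = u := by
  induction u with
  | nil => rfl
  | cons a t ih => simp [List.pmap, ih]

lemma finite_interval (c s : PresentedGroup (braidRels N)) :
    {d | le' N c d ∧ le' N d s}.Finite := by
  set K := (Multiplicative.toAdd (expo N (c⁻¹ * s))).toNat with hK
  apply Set.Finite.subset (Set.Finite.image (fun l : List (Fin N) => c * piw N (l.map Fin.val))
    (List.finite_length_le (Fin N) K))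
  rintro d ⟨⟨u, hu, rfl⟩, ⟨v, hv, hs⟩⟩
  refine ⟨u.pmap (fun a h => (⟨a, h⟩ : Fin N)) hu, ?_, ?_⟩
  · -- length bound
    have he : c⁻¹ * s = piw N (u ++ v) := by
      rw [piw_append, hs]; group
    have := expo_piw (N := N) (l := u ++ v) (by
      intro x hx; rcases List.mem_append.mp hx with hx | hx
      exacts [hu x hx, hv x hx])
    rw [← he] at this
    have hlen : (Multiplicative.toAdd (expo N (c⁻¹ * s))) = ((u ++ v).length : ℤ) := by
      rw [this]; simp
    simp only [Set.mem_setOf_eq, List.length_pmap]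
    rw [hK]
    have : (u ++ v).length = u.length + v.length := by simp
    have hpl : (u.pmap (fun a h => (⟨a, h⟩ : Fin N)) hu).length = u.length := List.length_pmap
    omega
  · exact congrArg (fun l => c * piw N l) (map_val_pmap u hu)

lemma le'_to_dvd {c : PresentedGroup (braidRels N)} {u cs : List ℕ} (hu : Bdd N u)
    (hcs : Bdd N cs) (h : le' N (c * piw N u) (c * piw N cs)) : Dvd u cs := by
  obtain ⟨v, hv, he⟩ := h
  rw [mul_assoc] at he
  have h2 : piw N cs = piw N (u ++ v) := by
    rw [piw_append]; exact mul_left_cancel he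
  exact ⟨v, pi_inj hcs (by
    intro x hx; rcases List.mem_append.mp hx with hx | hx
    exacts [hu x hx, hv x hx]) h2⟩

lemma bdd_of_dvd {u c : List ℕ} (h : Dvd u c) (hc : Bdd N c) :
    Bdd N u ∧ ∃ x, Bdd N x ∧ Eqv c (u ++ x) := by
  obtain ⟨x, hx⟩ := h
  have hb := Eqv.mem_imp hx (fun a => a < N) hc
  constructor
  · intro a ha; exact hb a (by simp [ha])
  · exact ⟨x, fun a ha => hb a (by simp [ha]), hx⟩

lemma dvd_to_le' {c : PresentedGroup (braidRels N)} {u m : List ℕ} (hm : Bdd N m)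
    (h : Dvd u m) : le' N (c * piw N u) (c * piw N m) := by
  obtain ⟨hub, x, hxb, hx⟩ := bdd_of_dvd h hm
  refine ⟨x, hxb, ?_⟩
  rw [mul_assoc, ← piw_append]
  rw [pi_eqv hx hm]

lemma directed_max {D : Set (PresentedGroup (braidRels N))} (hfin : D.Finite)
    {c : PresentedGroup (braidRels N)} (hc : c ∈ D)
    (hdir : ∀ d1 ∈ D, ∀ d2 ∈ D, ∃ d ∈ D, le' N d1 d ∧ le' N d2 d) :
    ∃ a ∈ D, ∀ d ∈ D, le' N d a := by
  classical
  have main : ∀ F : Finset (PresentedGroup (braidRels N)), ↑F ⊆ D →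
      ∃ a ∈ D, ∀ d ∈ F, le' N d a := by
    intro F
    induction F using Finset.induction_on with
    | empty => intro _; exact ⟨c, hc, by simp⟩
    | insert _ _ hg ih =>
      rename_i g F'
      intro hFD
      obtain ⟨a, haD, ha⟩ := ih (fun z hz => hFD (by simp [hz]))
      obtain ⟨d, hdD, hd1, hd2⟩ := hdir g (hFD (by simp)) a haD
      refine ⟨d, hdD, ?_⟩
      intro z hz
      rcases Finset.mem_insert.mp hz with rfl | hz
      · exact hd1
      · exact le'_trans (ha z hz) hd2
  obtain ⟨a, haD, ha⟩ := main hfin.toFinset (by simp)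
  exact ⟨a, haD, fun d hd => ha d (hfin.mem_toFinset.mpr hd)⟩

lemma glb_above {S : Set (PresentedGroup (braidRels N))} (hfin : S.Finite)
    {s₀ : PresentedGroup (braidRels N)} (hs₀ : s₀ ∈ S)
    {c : PresentedGroup (braidRels N)} (hc : ∀ s ∈ S, le' N c s) :
    ∃ a, le' N c a ∧ (∀ s ∈ S, le' N a s) ∧
      ∀ d, le' N c d → (∀ s ∈ S, le' N d s) → le' N d a := by
  set D := {d | le' N c d ∧ ∀ s ∈ S, le' N d s} with hD
  have hDfin : D.Finite := (finite_interval c s₀).subset (fun d hd => ⟨hd.1, hd.2 s₀ hs₀⟩)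
  have hcD : c ∈ D := ⟨le'_refl c, hc⟩
  have hdir : ∀ d1 ∈ D, ∀ d2 ∈ D, ∃ d ∈ D, le' N d1 d ∧ le' N d2 d := by
    rintro d1 ⟨⟨u1, hu1, rfl⟩, hd1⟩ d2 ⟨⟨u2, hu2, rfl⟩, hd2⟩
    obtain ⟨cs₀, hcs₀b, hcs₀⟩ := hc s₀ hs₀
    have hdvd1 : Dvd u1 cs₀ := le'_to_dvd hu1 hcs₀b (by rw [← hcs₀]; exact hd1 s₀ hs₀)
    have hdvd2 : Dvd u2 cs₀ := le'_to_dvd hu2 hcs₀b (by rw [← hcs₀]; exact hd2 s₀ hs₀)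
    obtain ⟨m, hm1, hm2, hm3, hmu⟩ := word_lcm hdvd1 hdvd2
    have hmb : Bdd N m := (bdd_of_dvd hm3 hcs₀b).1
    refine ⟨c * piw N m, ⟨⟨m, hmb, rfl⟩, ?_⟩, ?_, ?_⟩
    · -- lower bound of S
      intro s hs
      obtain ⟨cs, hcsb, hcs⟩ := hc s hs
      have h1 : Dvd u1 cs := le'_to_dvd hu1 hcsb (by rw [← hcs]; exact hd1 s hs)
      have h2 : Dvd u2 cs := le'_to_dvd hu2 hcsb (by rw [← hcs]; exact hd2 s hs)
      have := dvd_to_le' (c := c) hcsb (hmu cs h1 h2)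
      rw [← hcs] at this
      exact this
    · exact dvd_to_le' hmb hm1
    · exact dvd_to_le' hmb hm2
  obtain ⟨a, haD, hamax⟩ := directed_max hDfin hcD hdir
  exact ⟨a, haD.1, haD.2, fun d h1 h2 => hamax d ⟨h1, h2⟩⟩

theorem exists_glb {S : Set (PresentedGroup (braidRels N))} (hfin : S.Finite)
    (hne : S.Nonempty) :
    ∃ a, (∀ s ∈ S, le' N a s) ∧ ∀ b, (∀ s ∈ S, le' N b s) → le' N b a := by
  obtain ⟨s₀, hs₀⟩ := hne
  obtain ⟨c₀, hc₀⟩ := lower_bound_list hfin.toFinset.toList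
  have hc₀S : ∀ s ∈ S, le' N c₀ s := fun s hs =>
    hc₀ s (by rw [Finset.mem_toList, Set.Finite.mem_toFinset]; exact hs)
  obtain ⟨a, hac, haS, hamax⟩ := glb_above hfin hs₀ hc₀S
  refine ⟨a, haS, ?_⟩
  intro b hb
  obtain ⟨c₁, hc₁b, hc₁c₀⟩ := lower_bound_pair b c₀
  have hc₁S : ∀ s ∈ S, le' N c₁ s := fun s hs => le'_trans hc₁c₀ (hc₀S s hs)
  obtain ⟨a₁, ha₁c, ha₁S, ha₁max⟩ := glb_above hfin hs₀ hc₁S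
  have h1 : le' N a a₁ := ha₁max a (le'_trans hc₁c₀ hac) haS
  have h2 : le' N a₁ a := hamax a₁ (ha₁max c₀ hc₁c₀ hc₀S) ha₁S
  have heq : a₁ = a := le'_antisymm h2 h1
  have hba₁ : le' N b a₁ := ha₁max b hc₁b hb
  rw [heq] at hba₁
  exact hba₁

/-- The braid group is torsion-free. -/
theorem presented_torsionFree : Monoid.IsTorsionFree (PresentedGroup (braidRels N)) := by
  intro x hx hford
  obtain ⟨k, hk, hxk⟩ := isOfFinOrder_iff_pow_eq_one.mp hford
  set S : Set (PresentedGroup (braidRels N)) := Set.range (fun i : Fin k => x ^ (i : ℕ)) with hS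
  have hfinS : S.Finite := Set.finite_range _
  have hne : S.Nonempty := ⟨x ^ ((⟨0, hk⟩ : Fin k) : ℕ), ⟨⟨0, hk⟩, rfl⟩⟩
  have hxS : ∀ s ∈ S, x * s ∈ S := by
    rintro s ⟨i, rfl⟩
    by_cases hik : (i : ℕ) + 1 < k
    · exact ⟨⟨(i : ℕ) + 1, hik⟩, by simp [pow_succ, pow_mul_comm']⟩
    · have : (i : ℕ) + 1 = k := by have := i.isLt; omega
      refine ⟨⟨0, hk⟩, ?_⟩
      show x ^ (0 : ℕ) = x * x ^ (i : ℕ)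
      rw [pow_zero, ← pow_succ']
      rw [this, hxk]
  have hxS' : ∀ s ∈ S, x⁻¹ * s ∈ S := by
    rintro s ⟨i, rfl⟩
    rcases Nat.eq_zero_or_pos (i : ℕ) with h0 | hpos
    · refine ⟨⟨k - 1, by omega⟩, ?_⟩
      show x ^ (k - 1) = x⁻¹ * x ^ (i : ℕ)
      rw [h0, pow_zero, mul_one, eq_comm, inv_eq_iff_mul_eq_one, ← pow_succ']
      rw [show k - 1 + 1 = k by omega, hxk]
    · refine ⟨⟨(i : ℕ) - 1, by have := i.isLt; omega⟩, ?_⟩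
      show x ^ ((i : ℕ) - 1) = x⁻¹ * x ^ (i : ℕ)
      rw [eq_inv_mul_iff_mul_eq, ← pow_succ']
      congr 1
      omega
  obtain ⟨a, ha1, ha2⟩ := exists_glb hfinS hne
  have hlb : ∀ s ∈ S, le' N (x * a) s := by
    intro s hs
    have h1 := ha1 (x⁻¹ * s) (hxS' s hs)
    have h2 := le'_mul_left x h1
    rw [mul_inv_cancel_left] at h2
    exact h2
  have hlb' : ∀ s ∈ S, le' N (x⁻¹ * a) s := by
    intro s hs
    have h1 := ha1 (x * s) (hxS s hs)
    have h2 := le'_mul_left x⁻¹ h1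
    rw [inv_mul_cancel_left] at h2
    exact h2
  have hle1 : le' N (x * a) a := ha2 _ hlb
  have hle2 : le' N a (x * a) := by
    have := le'_mul_left x (ha2 _ hlb')
    rw [mul_inv_cancel_left] at this
    exact this
  have heq : x * a = a := le'_antisymm hle1 hle2
  apply hx
  have : x * a = 1 * a := by rw [one_mul, heq]
  exact mul_right_cancel this

end Braid

/-- The pure braid group `P_n`, i.e. the kernel of the canonical surjection `B_n → S_n`
(sending each generator `σ_i` to the transposition `(i, i+1)`), is torsion-free; consequently
any finite subgroup of `B_n` injects into `S_n` under the canonical map. -/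
theorem pureBraidGroup_isTorsionFree (n : ℕ) (φ : BraidGroup n →* Equiv.Perm (Fin n))
    (hφ : ∀ i : Fin (n - 1),
      φ (BraidGroup.gen n i) =
        Equiv.swap (⟨(i : ℕ), by omega⟩ : Fin n) (⟨(i : ℕ) + 1, by omega⟩ : Fin n)) :
    Monoid.IsTorsionFree φ.ker ∧
      ∀ H : Subgroup (BraidGroup n), Finite H →
        Function.Injective (fun h : H => φ (h : BraidGroup n)) := by
  have hTF : Monoid.IsTorsionFree (BraidGroup n) := Braid.presented_torsionFree (N := n - 1)
  constructor
  · intro g hg hford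
    have h1 : IsOfFinOrder (g : BraidGroup n) := φ.ker.subtype.isOfFinOrder hford
    have h2 : (g : BraidGroup n) ≠ 1 := fun he => hg (OneMemClass.coe_eq_one.mp he)
    exact hTF _ h2 h1
  · intro H hH
    intro h1 h2 _
    have hfin : IsOfFinOrder (h1 * h2⁻¹ : H) := isOfFinOrder_of_finite _
    have hfin' : IsOfFinOrder ((h1 * h2⁻¹ : H) : BraidGroup n) :=
      H.subtype.isOfFinOrder hfin
    have hone : (h1 * h2⁻¹ : H) = 1 := by
      by_contra hne
      exact hTF ((h1 * h2⁻¹ : H) : BraidGroup n)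
        (fun he => hne (OneMemClass.coe_eq_one.mp he)) hfin'
    exact mul_inv_eq_one.mp hone
end
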